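/- arXiv:1704.00903 — 6 statements merged into one kernel-verified Lean document; each statement's English description precedes it below -/
import Mathlib

section
/- Let E be a standard Borel space, let κ be a Markov kernel from E to E, let x₀ ∈ E, and let ℙ denote the law on E^ℕ of the time-homogeneous Markov chain (X_n)_{n≥0} with X_0 = x₀ and one-step transition kernel κ (the Ionescu–Tulcea trajectory measure), where X_n is the n-th coordinate map. Let B, B₁ ⊆ E be measurable sets, let k ≥ 1 be a natural number and λ > 0 a real number. Assume that ℙ(X_n ∈ B for all n ∈ ℕ) = 1 and that the k-step kernel κ^k (the k-fold composition of κ) satisfies κ^k(x, B₁) ≥ λ for every x ∈ B. Then ℙ(∃ n₀ ∈ ℕ, X_{n₀} ∈ B₁) = 1. -/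
open MeasureTheory ProbabilityTheory Set
open scoped ENNReal NNReal

/-- The `k`-step kernel: the `k`-fold composition of `κ` with itself. -/
noncomputable def kernelPow {E : Type*} [MeasurableSpace E] (κ : Kernel E E) :
    ℕ → Kernel E E
  | 0 => Kernel.id
  | n + 1 => κ ∘ₖ kernelPow κ n

/-- The σ-algebra on trajectories generated by the coordinates `0, …, n`. -/
def trajFiltration (E : Type*) [MeasurableSpace E] (n : ℕ) : MeasurableSpace (ℕ → E) :=
  MeasurableSpace.comap (fun ω (i : Fin (n + 1)) => ω i) inferInstance

section Aux

variable {E : Type*} [MeasurableSpace E]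

instance kernelPow.instIsMarkovKernel (κ : Kernel E E) [IsMarkovKernel κ] (k : ℕ) :
    IsMarkovKernel (kernelPow κ k) := by
  induction k with
  | zero => rw [kernelPow]; infer_instance
  | succ n ih => rw [kernelPow]; infer_instance

lemma trajFiltration_le (n : ℕ) : trajFiltration E n ≤ (inferInstance : MeasurableSpace (ℕ → E)) := by
  rintro S ⟨T, hT, rfl⟩
  exact (measurable_pi_lambda _ fun i => measurable_pi_apply _) hT

lemma trajFiltration_mono {n m : ℕ} (h : n ≤ m) :
    trajFiltration E n ≤ trajFiltration E m := by
  rintro S ⟨T, hT, rfl⟩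
  refine ⟨(fun v (i : Fin (n + 1)) => v (Fin.castLE (by omega) i)) ⁻¹' T,
    (measurable_pi_lambda _ fun i => measurable_pi_apply _) hT, ?_⟩
  rfl

lemma measurableSet_coord {i n : ℕ} (h : i ≤ n) {A : Set E} (hA : MeasurableSet A) :
    MeasurableSet[trajFiltration E n] {ω : ℕ → E | ω i ∈ A} :=
  ⟨(fun v : Fin (n + 1) → E => v ⟨i, by omega⟩) ⁻¹' A, (measurable_pi_apply _) hA, rfl⟩

variable (κ : Kernel E E) [IsMarkovKernel κ] (P : Measure (ℕ → E)) [IsProbabilityMeasure P]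

/-- One-step Markov property, functional form. -/
lemma markov_fun
    (hMarkov : ∀ (n : ℕ) (S : Set (ℕ → E)), MeasurableSet[trajFiltration E n] S →
      ∀ (A : Set E), MeasurableSet A →
        P (S ∩ {ω | ω (n + 1) ∈ A}) = ∫⁻ ω in S, κ (ω n) A ∂P)
    (n : ℕ) {S : Set (ℕ → E)} (hS : MeasurableSet[trajFiltration E n] S)
    {f : E → ℝ≥0∞} (hf : Measurable f) :
    ∫⁻ ω in S, f (ω (n + 1)) ∂P = ∫⁻ ω in S, ∫⁻ y, f y ∂(κ (ω n)) ∂P := by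
  refine Measurable.ennreal_induction
    (motive := fun f => ∫⁻ ω in S, f (ω (n + 1)) ∂P = ∫⁻ ω in S, ∫⁻ y, f y ∂(κ (ω n)) ∂P)
    ?_ ?_ ?_ hf
  · intro c s hs
    have h1 : (fun ω : ℕ → E => s.indicator (fun _ => c) (ω (n + 1)))
        = ((fun ω : ℕ → E => ω (n + 1)) ⁻¹' s).indicator (fun _ => c) := by
      ext ω
      by_cases h : ω (n + 1) ∈ s <;> simp [Set.indicator_apply, h]
    have hpre : MeasurableSet ((fun ω : ℕ → E => ω (n + 1)) ⁻¹' s) :=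
      (measurable_pi_apply _) hs
    have hm : Measurable fun ω : ℕ → E => κ (ω n) s :=
      (Kernel.measurable_coe κ hs).comp (measurable_pi_apply n)
    rw [h1, lintegral_indicator_const hpre, Measure.restrict_apply hpre]
    simp_rw [lintegral_indicator_const hs]
    rw [lintegral_const_mul _ hm, ← hMarkov n S hS s hs, Set.inter_comm]
    rfl
  · intro f g hdisj hfm hgm ihf ihg
    simp only [Pi.add_apply]
    have hfc : Measurable fun ω : ℕ → E => f (ω (n + 1)) :=
      hfm.comp (measurable_pi_apply (n + 1))
    have hFc : Measurable fun ω : ℕ → E => ∫⁻ y, f y ∂(κ (ω n)) :=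
      (hfm.lintegral_kernel (κ := κ)).comp (measurable_pi_apply n)
    rw [lintegral_add_left hfc, ihf, ihg]
    simp_rw [lintegral_add_left hfm]
    rw [lintegral_add_left hFc]
  · intro f hfm hmono ihf
    have hmono' : Monotone fun m (ω : ℕ → E) => f m (ω (n + 1)) :=
      fun i j hij ω => hmono hij _
    have hfc : ∀ m, Measurable fun ω : ℕ → E => f m (ω (n + 1)) :=
      fun m => (hfm m).comp (measurable_pi_apply (n + 1))
    have hFc : ∀ m, Measurable fun ω : ℕ → E => ∫⁻ y, f m y ∂(κ (ω n)) :=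
      fun m => ((hfm m).lintegral_kernel (κ := κ)).comp (measurable_pi_apply n)
    rw [show (fun ω : ℕ → E => ⨆ m, f m (ω (n + 1)))
        = fun ω => ⨆ m, (fun ω : ℕ → E => f m (ω (n + 1))) ω from rfl]
    rw [lintegral_iSup hfc hmono']
    simp_rw [lintegral_iSup hfm hmono]
    rw [lintegral_iSup hFc
      (fun i j hij ω => lintegral_mono fun y => hmono hij y)]
    exact iSup_congr ihf

/-- k-step Markov property, functional form. -/
lemma markov_pow
    (hMarkov : ∀ (n : ℕ) (S : Set (ℕ → E)), MeasurableSet[trajFiltration E n] S →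
      ∀ (A : Set E), MeasurableSet A →
        P (S ∩ {ω | ω (n + 1) ∈ A}) = ∫⁻ ω in S, κ (ω n) A ∂P)
    (k : ℕ) (n : ℕ) {S : Set (ℕ → E)} (hS : MeasurableSet[trajFiltration E n] S)
    {f : E → ℝ≥0∞} (hf : Measurable f) :
    ∫⁻ ω in S, f (ω (n + k)) ∂P = ∫⁻ ω in S, ∫⁻ y, f y ∂(kernelPow κ k (ω n)) ∂P := by
  induction k generalizing f with
  | zero =>
    simp only [Nat.add_zero, kernelPow, Kernel.id_apply]
    simp_rw [lintegral_dirac' _ hf]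
  | succ k ih =>
    have h1 : ∫⁻ ω in S, f (ω (n + (k + 1))) ∂P
        = ∫⁻ ω in S, ∫⁻ y, f y ∂(κ (ω (n + k))) ∂P :=
      markov_fun κ P hMarkov (n + k) (trajFiltration_mono (Nat.le_add_right n k) S hS) hf
    rw [h1, ih (hf.lintegral_kernel (κ := κ))]
    simp only [kernelPow]
    refine lintegral_congr fun ω => ?_
    rw [Kernel.lintegral_comp κ (kernelPow κ k) (ω n) hf]

/-- k-step Markov property, set form. -/
lemma markov_pow_set
    (hMarkov : ∀ (n : ℕ) (S : Set (ℕ → E)), MeasurableSet[trajFiltration E n] S →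
      ∀ (A : Set E), MeasurableSet A →
        P (S ∩ {ω | ω (n + 1) ∈ A}) = ∫⁻ ω in S, κ (ω n) A ∂P)
    (k : ℕ) (n : ℕ) {S : Set (ℕ → E)} (hS : MeasurableSet[trajFiltration E n] S)
    {A : Set E} (hA : MeasurableSet A) :
    P (S ∩ {ω | ω (n + k) ∈ A}) = ∫⁻ ω in S, kernelPow κ k (ω n) A ∂P := by
  have := markov_pow κ P hMarkov k n hS (f := A.indicator fun _ => (1 : ℝ≥0∞))
    (measurable_one.indicator hA)
  have h1 : (fun ω : ℕ → E => A.indicator (fun _ => (1 : ℝ≥0∞)) (ω (n + k)))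
      = ((fun ω : ℕ → E => ω (n + k)) ⁻¹' A).indicator (fun _ => 1) := by
    ext ω
    by_cases h : ω (n + k) ∈ A <;> simp [Set.indicator_apply, h]
  have hpre : MeasurableSet ((fun ω : ℕ → E => ω (n + k)) ⁻¹' A) :=
    (measurable_pi_apply _) hA
  rw [h1, lintegral_indicator_const hpre, Measure.restrict_apply hpre, one_mul,
    Set.inter_comm] at this
  have hset : {ω : ℕ → E | ω (n + k) ∈ A} = (fun ω : ℕ → E => ω (n + k)) ⁻¹' A := rfl
  rw [hset, this]
  refine setLIntegral_congr_fun_ae (trajFiltration_le n S hS) (Filter.Eventually.of_forall ?_)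
  intro ω _
  simp [lintegral_indicator_const hA]

end Aux

theorem stmt0
    {E : Type*} [MeasurableSpace E] [StandardBorelSpace E]
    (κ : Kernel E E) [IsMarkovKernel κ]
    (x₀ : E)
    (P : Measure (ℕ → E)) [IsProbabilityMeasure P]
    -- `P` is the trajectory law of the chain started at `x₀` with one-step kernel `κ`:
    -- the chain starts at `x₀` …
    (hinit : P {ω | ω 0 = x₀} = 1)
    -- … and satisfies the Markov property with transition kernel `κ`
    (hMarkov : ∀ (n : ℕ) (S : Set (ℕ → E)), MeasurableSet[trajFiltration E n] S →
      ∀ (A : Set E), MeasurableSet A →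
        P (S ∩ {ω | ω (n + 1) ∈ A}) = ∫⁻ ω in S, κ (ω n) A ∂P)
    (B B₁ : Set E) (hB : MeasurableSet B) (hB₁ : MeasurableSet B₁)
    (k : ℕ) (hk : 1 ≤ k) (lam : ℝ) (hlam : 0 < lam)
    -- the chain stays in `B` at all times, almost surely
    (hstay : P {ω | ∀ n : ℕ, ω n ∈ B} = 1)
    -- the `k`-step kernel satisfies `κ^k(x, B₁) ≥ λ` for every `x ∈ B`
    (hstep : ∀ x ∈ B, ENNReal.ofReal lam ≤ kernelPow κ k x B₁) :
    P {ω | ∃ n₀ : ℕ, ω n₀ ∈ B₁} = 1 := by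
  -- the "bad" sets
  set S : ℕ → Set (ℕ → E) := fun m => {ω | ∀ j ≤ m, ω (j * k) ∈ B \ B₁} with hSdef
  have hSmeas : ∀ m, MeasurableSet[trajFiltration E (m * k)] (S m) := by
    intro m
    have hEq : S m = ⋂ j ∈ Set.Iic m, {ω : ℕ → E | ω (j * k) ∈ B \ B₁} := by
      ext ω; simp [hSdef]
    rw [hEq]
    exact MeasurableSet.biInter (Set.to_countable _) fun j hj =>
      measurableSet_coord (Nat.mul_le_mul_right k hj) (hB.diff hB₁)
  -- `B` is nonempty, so `lam ≤ 1`
  have hBne : B.Nonempty := by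
    by_contra h
    rw [Set.not_nonempty_iff_eq_empty] at h
    have : {ω : ℕ → E | ∀ n : ℕ, ω n ∈ B} = ∅ := by
      ext ω; simp [h]
    rw [this] at hstay
    simp at hstay
  obtain ⟨x, hx⟩ := hBne
  have hlam1 : lam ≤ 1 := by
    have := (hstep x hx).trans (prob_le_one (μ := kernelPow κ k x) (s := B₁))
    exact ENNReal.ofReal_le_one.mp this
  -- the decay estimate
  set t : ℝ≥0∞ := ENNReal.ofReal (1 - lam) with htdef
  have hdec : ∀ m, P (S (m + 1)) ≤ t * P (S m) := by
    intro m
    set T : Set (ℕ → E) := {ω : ℕ → E | ω (m * k + k) ∈ B₁} with hTdef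
    have hTmeas : MeasurableSet T := (measurable_pi_apply _) hB₁
    have hlow : ENNReal.ofReal lam * P (S m) ≤ P (S m ∩ T) := by
      rw [markov_pow_set κ P hMarkov k (m * k) (hSmeas m) hB₁]
      calc ENNReal.ofReal lam * P (S m) = ∫⁻ _ in S m, ENNReal.ofReal lam ∂P := by
            rw [setLIntegral_const]
        _ ≤ ∫⁻ ω in S m, kernelPow κ k (ω (m * k)) B₁ ∂P := by
            refine setLIntegral_mono ((Kernel.measurable_coe _ hB₁).comp
              (measurable_pi_apply _)) fun ω hω => ?_
            exact hstep _ (hω m le_rfl).1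
    have hsplit : P (S m ∩ T) + P (S m \ T) = P (S m) :=
      measure_inter_add_diff (S m) hTmeas
    have hsub : S (m + 1) ⊆ S m \ T := by
      intro ω hω
      refine ⟨fun j hj => hω j (hj.trans (Nat.le_succ m)), ?_⟩
      have := hω (m + 1) le_rfl
      simp only [hTdef, Set.mem_setOf_eq]
      rw [show m * k + k = (m + 1) * k by ring]
      exact this.2
    have hkey : P (S (m + 1)) + ENNReal.ofReal lam * P (S m) ≤ P (S m) := by
      calc P (S (m + 1)) + ENNReal.ofReal lam * P (S m)
          ≤ P (S m \ T) + P (S m ∩ T) := add_le_add (measure_mono hsub) hlow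
        _ = P (S m) := by rw [add_comm]; exact hsplit
    have h1 : P (S (m + 1)) ≤ P (S m) - ENNReal.ofReal lam * P (S m) :=
      ENNReal.le_sub_of_add_le_right (by exact ENNReal.mul_ne_top ENNReal.ofReal_ne_top (measure_ne_top P _)) hkey
    have h2 : P (S m) - ENNReal.ofReal lam * P (S m) = t * P (S m) := by
      rw [htdef, ENNReal.ofReal_sub _ hlam.le, ENNReal.ofReal_one,
        ENNReal.sub_mul fun _ _ => measure_ne_top P _, one_mul]
    rw [← h2]; exact h1
  have hiter : ∀ m, P (S m) ≤ t ^ m := by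
    intro m
    induction m with
    | zero => simpa using prob_le_one
    | succ m ih =>
      calc P (S (m + 1)) ≤ t * P (S m) := hdec m
        _ ≤ t * t ^ m := by gcongr
        _ = t ^ (m + 1) := by ring
  have ht1 : t < 1 := by
    rw [htdef]
    exact ENNReal.ofReal_lt_one.mpr (by linarith)
  have htend : Filter.Tendsto (fun m => t ^ m) Filter.atTop (nhds 0) :=
    ENNReal.tendsto_pow_atTop_nhds_zero_of_lt_one ht1
  -- the never-hitting set
  set N : Set (ℕ → E) := {ω : ℕ → E | ∀ n, ω n ∉ B₁} with hNdef
  have hNmeas : MeasurableSet N := by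
    have : N = ⋂ n, (fun ω : ℕ → E => ω n) ⁻¹' B₁ᶜ := by ext ω; simp [hNdef]
    rw [this]
    exact MeasurableSet.iInter fun n => (measurable_pi_apply n) hB₁.compl
  have hStaymeas : MeasurableSet {ω : ℕ → E | ∀ n : ℕ, ω n ∈ B} := by
    have : {ω : ℕ → E | ∀ n : ℕ, ω n ∈ B} = ⋂ n, (fun ω : ℕ → E => ω n) ⁻¹' B := by
      ext ω; simp
    rw [this]
    exact MeasurableSet.iInter fun n => (measurable_pi_apply n) hB
  have hStayc : P {ω : ℕ → E | ∀ n : ℕ, ω n ∈ B}ᶜ = 0 := by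
    rw [measure_compl hStaymeas (measure_ne_top P _), hstay, measure_univ, tsub_self]
  have hNsub : ∀ m, N ⊆ S m ∪ {ω : ℕ → E | ∀ n : ℕ, ω n ∈ B}ᶜ := by
    intro m ω hω
    by_cases hst : ∀ n : ℕ, ω n ∈ B
    · exact Or.inl fun j _ => ⟨hst _, hω _⟩
    · exact Or.inr hst
  have hNle : ∀ m, P N ≤ t ^ m := by
    intro m
    calc P N ≤ P (S m ∪ {ω : ℕ → E | ∀ n : ℕ, ω n ∈ B}ᶜ) := measure_mono (hNsub m)
      _ ≤ P (S m) + P {ω : ℕ → E | ∀ n : ℕ, ω n ∈ B}ᶜ := measure_union_le _ _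
      _ = P (S m) := by rw [hStayc, add_zero]
      _ ≤ t ^ m := hiter m
  have hN0 : P N = 0 := by
    refine le_antisymm ?_ (by positivity)
    exact ge_of_tendsto htend (Filter.Eventually.of_forall hNle)
  have hcompl : {ω : ℕ → E | ∃ n₀ : ℕ, ω n₀ ∈ B₁} = Nᶜ := by
    ext ω; simp [hNdef]
  rw [hcompl, measure_compl hNmeas (measure_ne_top P _), hN0, measure_univ, tsub_zero]
end

section
/- Let b > 0, let f and g be continuous strictly increasing maps of [0,b] into [0,b], and let I₁ ⊆ I₂ ⊆ [0,b] be compact intervals such that f(I₁) ⊆ I₁, g(I₁) ⊆ I₁, f(I₂) ⊆ I₂, g(I₂) ⊆ I₂, and for every x ∈ I₂ there exists m ∈ ℕ with f^[m](x) ∈ I₁ or g^[m](x) ∈ I₁ (where f^[m] denotes the m-th iterate). Then for every x₀ ∈ I₂, μ({ω : ∃ n₀ ∈ ℕ, ∀ n ≥ n₀, X n ω ∈ I₁}) = 1. -/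
open MeasureTheory ProbabilityTheory Filter Set

/-- The random orbit driven by a sequence of coin flips: apply `f` when the coin shows
`true` and `g` when it shows `false`. -/
def randOrbit (f g : ℝ → ℝ) (x₀ : ℝ) : ℕ → (ℕ → Bool) → ℝ
  | 0, _ => x₀
  | n + 1, ω => if ω n then f (randOrbit f g x₀ n ω) else g (randOrbit f g x₀ n ω)

theorem stmt1
    (b : ℝ) (hb : 0 < b)
    (f g : ℝ → ℝ)
    (hfmaps : MapsTo f (Icc 0 b) (Icc 0 b)) (hgmaps : MapsTo g (Icc 0 b) (Icc 0 b))
    (hfc : ContinuousOn f (Icc 0 b)) (hgc : ContinuousOn g (Icc 0 b))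
    (hfm : StrictMonoOn f (Icc 0 b)) (hgm : StrictMonoOn g (Icc 0 b))
    -- the compact intervals `I₁ = [a₁, c₁] ⊆ I₂ = [a₂, c₂] ⊆ [0, b]`
    (a₁ c₁ a₂ c₂ : ℝ) (ha₁c₁ : a₁ ≤ c₁) (ha₂c₂ : a₂ ≤ c₂)
    (hI₁I₂ : Icc a₁ c₁ ⊆ Icc a₂ c₂) (hI₂b : Icc a₂ c₂ ⊆ Icc 0 b)
    -- invariance of the intervals
    (hfI₁ : MapsTo f (Icc a₁ c₁) (Icc a₁ c₁)) (hgI₁ : MapsTo g (Icc a₁ c₁) (Icc a₁ c₁))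
    (hfI₂ : MapsTo f (Icc a₂ c₂) (Icc a₂ c₂)) (hgI₂ : MapsTo g (Icc a₂ c₂) (Icc a₂ c₂))
    -- every point of `I₂` is sent into `I₁` by some iterate of `f` or of `g`
    (habs : ∀ x ∈ Icc a₂ c₂, ∃ m : ℕ, f^[m] x ∈ Icc a₁ c₁ ∨ g^[m] x ∈ Icc a₁ c₁)
    -- the i.i.d. coin-flip measure
    (p : ℝ) (hp : p ∈ Ioo (0 : ℝ) 1)
    (μ : Measure (ℕ → Bool)) [IsProbabilityMeasure μ]
    (hindep : iIndepFun (fun n ω => ω n) μ)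
    (hcoin : ∀ n, μ {ω | ω n = true} = ENNReal.ofReal p) :
    ∀ x₀ ∈ Icc a₂ c₂,
      μ {ω | ∃ n₀ : ℕ, ∀ n ≥ n₀, randOrbit f g x₀ n ω ∈ Icc a₁ c₁} = 1 := by
  intro x₀ hx₀
  obtain ⟨hp0, hp1⟩ := hp
  set H : Bool → ℝ → ℝ := fun c => cond c f g with hHdef
  have hHmaps2 : ∀ c, MapsTo (H c) (Icc a₂ c₂) (Icc a₂ c₂) := by
    intro c; cases c <;> simpa [H]
  have hHmaps1 : ∀ c, MapsTo (H c) (Icc a₁ c₁) (Icc a₁ c₁) := by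
    intro c; cases c <;> simpa [H]
  have hHmono : ∀ c, MonotoneOn (H c) (Icc a₂ c₂) := by
    intro c; cases c
    · exact (hgm.monotoneOn).mono hI₂b
    · exact (hfm.monotoneOn).mono hI₂b
  -- recursion formula
  have hrec : ∀ (x : ℝ) (n : ℕ) (ω : ℕ → Bool),
      randOrbit f g x (n + 1) ω = H (ω n) (randOrbit f g x n ω) := by
    intro x n ω
    rcases Bool.dichotomy (ω n) with h | h <;> simp [randOrbit, h, H]
  -- invariance of I₂
  have hL1 : ∀ (n : ℕ) (ω : ℕ → Bool), randOrbit f g x₀ n ω ∈ Icc a₂ c₂ := by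
    intro n ω
    induction n with
    | zero => exact hx₀
    | succ n ih => rw [hrec]; exact hHmaps2 _ ih
  -- invariance of I₁
  have hL2 : ∀ (n m : ℕ) (ω : ℕ → Bool), randOrbit f g x₀ n ω ∈ Icc a₁ c₁ →
      randOrbit f g x₀ (n + m) ω ∈ Icc a₁ c₁ := by
    intro n m ω h
    induction m with
    | zero => exact h
    | succ m ih => rw [← Nat.add_assoc, hrec]; exact hHmaps1 _ ih
  -- iterates are monotone on I₂
  have hitmono : ∀ (c : Bool) (m : ℕ) {x y : ℝ}, x ∈ Icc a₂ c₂ → y ∈ Icc a₂ c₂ → x ≤ y →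
      (H c)^[m] x ≤ (H c)^[m] y := by
    intro c m
    induction m with
    | zero => intro x y _ _ h; simpa using h
    | succ m ih =>
      intro x y hx hy h
      rw [Function.iterate_succ_apply', Function.iterate_succ_apply']
      exact hHmono c (((hHmaps2 c).iterate m) hx) (((hHmaps2 c).iterate m) hy) (ih hx hy h)
  -- the word
  have hc₂ : c₂ ∈ Icc a₂ c₂ := ⟨ha₂c₂, le_refl _⟩
  have ha₂ : a₂ ∈ Icc a₂ c₂ := ⟨le_refl _, ha₂c₂⟩
  obtain ⟨m₁, hm₁⟩ := habs c₂ hc₂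
  obtain ⟨bit₁, hbit₁⟩ : ∃ c : Bool, (H c)^[m₁] c₂ ∈ Icc a₁ c₁ := by
    rcases hm₁ with h | h
    exacts [⟨true, h⟩, ⟨false, h⟩]
  obtain ⟨m₂, hm₂⟩ := habs a₂ ha₂
  obtain ⟨bit₂, hbit₂⟩ : ∃ c : Bool, (H c)^[m₂] a₂ ∈ Icc a₁ c₁ := by
    rcases hm₂ with h | h
    exacts [⟨true, h⟩, ⟨false, h⟩]
  set k := m₁ + m₂ with hk
  set w : ℕ → Bool := fun i => if i < m₁ then bit₁ else bit₂ with hw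
  -- running a constant block
  have hblock : ∀ (c : Bool) (t m : ℕ) (ω : ℕ → Bool), (∀ i, i < m → ω (t + i) = c) →
      randOrbit f g x₀ (t + m) ω = (H c)^[m] (randOrbit f g x₀ t ω) := by
    intro c t m ω hω
    induction m with
    | zero => simp
    | succ m ih =>
      rw [← Nat.add_assoc, hrec, ih (fun i hi => hω i (Nat.lt_succ_of_lt hi)),
        hω m (Nat.lt_succ_self m), Function.iterate_succ_apply']
  -- the word lemma
  have hL3 : ∀ (t : ℕ) (ω : ℕ → Bool), (∀ i, i < k → ω (t + i) = w i) →
      randOrbit f g x₀ (t + k) ω ∈ Icc a₁ c₁ := by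
    intro t ω hω
    have h1 : randOrbit f g x₀ (t + m₁) ω = (H bit₁)^[m₁] (randOrbit f g x₀ t ω) := by
      apply hblock
      intro i hi
      rw [hω i (lt_of_lt_of_le hi (Nat.le_add_right _ _))]
      simp [w, hi]
    have hy : randOrbit f g x₀ t ω ∈ Icc a₂ c₂ := hL1 t ω
    have hz2 : randOrbit f g x₀ (t + m₁) ω ∈ Icc a₂ c₂ := hL1 _ ω
    have hzc₁ : randOrbit f g x₀ (t + m₁) ω ≤ c₁ := by
      rw [h1]
      exact le_trans (hitmono bit₁ m₁ hy hc₂ hy.2) hbit₁.2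
    have h2 : randOrbit f g x₀ (t + k) ω = (H bit₂)^[m₂] (randOrbit f g x₀ (t + m₁) ω) := by
      have : t + k = (t + m₁) + m₂ := by omega
      rw [this]
      apply hblock
      intro i hi
      have : t + m₁ + i = t + (m₁ + i) := by omega
      rw [this, hω (m₁ + i) (by omega)]
      simp [w]
    rw [h2]
    constructor
    · exact le_trans hbit₂.1 (hitmono bit₂ m₂ ha₂ hz2 hz2.1)
    · exact le_trans (hitmono bit₂ m₂ hz2 (hI₁I₂ ⟨ha₁c₁, le_refl _⟩) hzc₁)
        (((hHmaps1 bit₂).iterate m₂ ⟨ha₁c₁, le_refl _⟩).2)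
  -- if k = 0 the target is everything
  rcases Nat.eq_zero_or_pos k with hk0 | hkpos
  · have : {ω : ℕ → Bool | ∃ n₀ : ℕ, ∀ n ≥ n₀, randOrbit f g x₀ n ω ∈ Icc a₁ c₁} = univ := by
      apply eq_univ_of_forall
      intro ω
      refine ⟨0, fun n _ => ?_⟩
      have h0 : randOrbit f g x₀ 0 ω ∈ Icc a₁ c₁ := by
        have := hL3 0 ω (fun i hi => absurd hi (by omega))
        simpa [hk0] using this
      simpa using hL2 0 n ω h0
    rw [this]; exact measure_univ
  -- block events
  set B : ℕ → Set (ℕ → Bool) := fun j => {ω | ∀ i, i < k → ω (j * k + i) = w i} with hB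
  -- rewrite B j as an intersection of coordinate events
  have hsets : ∀ j, B j = ⋂ n ∈ (Finset.range k).image (fun i => j * k + i),
      (fun ω : ℕ → Bool => ω n) ⁻¹' {w (n % k)} := by
    intro j
    ext ω
    simp only [hB, mem_setOf_eq, mem_iInter, Finset.mem_image, Finset.mem_range, mem_preimage,
      mem_singleton_iff]
    constructor
    · rintro h n ⟨i, hi, rfl⟩
      have hmod : (j * k + i) % k = i := by
        rw [Nat.add_comm, Nat.add_mul_mod_self_right]; exact Nat.mod_eq_of_lt hi
      rw [hmod]
      exact h i hi
    · intro h i hi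
      have hmod : (j * k + i) % k = i := by
        rw [Nat.add_comm, Nat.add_mul_mod_self_right]; exact Nat.mod_eq_of_lt hi
      have := h (j * k + i) ⟨i, hi, rfl⟩
      rwa [hmod] at this
  have hmeas : ∀ j, MeasurableSet (B j) := by
    intro j
    rw [hsets j]
    exact Finset.measurableSet_biInter _ fun n _ =>
      (measurable_pi_apply n) (MeasurableSet.singleton _)
  -- individual coordinate measures
  have hcoord : ∀ (n : ℕ) (c : Bool),
      μ ((fun ω : ℕ → Bool => ω n) ⁻¹' {c}) = cond c (ENNReal.ofReal p) (1 - ENNReal.ofReal p) := by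
    intro n c
    have htrue : μ ((fun ω : ℕ → Bool => ω n) ⁻¹' {true}) = ENNReal.ofReal p := by
      have : ((fun ω : ℕ → Bool => ω n) ⁻¹' {true}) = {ω | ω n = true} := by
        ext ω; simp
      rw [this]; exact hcoin n
    cases c
    · have hcompl : ((fun ω : ℕ → Bool => ω n) ⁻¹' {false}) =
          ((fun ω : ℕ → Bool => ω n) ⁻¹' {true})ᶜ := by
        ext ω; simp
      rw [hcompl, measure_compl ((measurable_pi_apply n) (MeasurableSet.singleton _))
        (measure_ne_top μ _), measure_univ, htrue]
      rfl
    · exact htrue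
  -- the measure applied to intersections of coordinate events
  have hind := (iIndepFun_iff_measure_inter_preimage_eq_mul.mp hindep)
  have hmain : ∀ (T : Finset ℕ), μ (⋂ n ∈ T, (fun ω : ℕ → Bool => ω n) ⁻¹' {w (n % k)}) =
      ∏ n ∈ T, μ ((fun ω : ℕ → Bool => ω n) ⁻¹' {w (n % k)}) := by
    intro T
    exact hind T (sets := fun n => ({w (n % k)} : Set Bool)) (fun i _ => MeasurableSet.singleton _)
  -- constant block probability
  set q : ENNReal := ∏ i ∈ Finset.range k, cond (w i) (ENNReal.ofReal p) (1 - ENNReal.ofReal p)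
    with hq
  have hinj : ∀ j : ℕ, InjOn (fun i => j * k + i) (Finset.range k) := by
    intro j i _ i' _ h
    simp only at h
    omega
  have hBval : ∀ j, μ (B j) = q := by
    intro j
    rw [hsets j, hmain, Finset.prod_image (hinj j), hq]
    apply Finset.prod_congr rfl
    intro i hi
    have hmod : (j * k + i) % k = i := by
      rw [Nat.add_comm, Nat.add_mul_mod_self_right]
      exact Nat.mod_eq_of_lt (Finset.mem_range.mp hi)
    rw [hcoord, hmod]
  have hq0 : q ≠ 0 := by
    rw [hq, Finset.prod_ne_zero_iff]
    intro i _
    cases w i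
    · simpa using (tsub_pos_of_lt (ENNReal.ofReal_lt_one.mpr hp1)).ne'
    · simpa using (ENNReal.ofReal_pos.mpr hp0).ne'
  -- independence of the block events
  have hdisj : ∀ j j' : ℕ, j ≠ j' → Disjoint ((Finset.range k).image (fun i => j * k + i))
      ((Finset.range k).image (fun i => j' * k + i)) := by
    intro j j' hne
    simp only [Finset.disjoint_left, Finset.mem_image, Finset.mem_range]
    rintro n ⟨i, hi, rfl⟩ ⟨i', hi', he⟩
    rcases Nat.lt_or_ge j j' with h | h
    · nlinarith [Nat.succ_le_of_lt h]
    · rcases Nat.lt_or_ge j' j with h' | h'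
      · nlinarith [Nat.succ_le_of_lt h']
      · exact hne (le_antisymm h' h)
  have hindepB : iIndepSet B μ := by
    rw [iIndepSet_iff_meas_biInter hmeas]
    intro S
    classical
    have hU : (⋂ j ∈ S, B j) = ⋂ n ∈ S.biUnion (fun j => (Finset.range k).image
        (fun i => j * k + i)), (fun ω : ℕ → Bool => ω n) ⁻¹' {w (n % k)} := by
      simp only [Finset.set_biInter_biUnion]
      exact iInter₂_congr fun j _ => hsets j
    rw [hU, hmain, Finset.prod_biUnion]
    · apply Finset.prod_congr rfl
      intro j _
      rw [hsets j, hmain]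
    · intro j hj j' hj' hne
      exact hdisj j j' hne
  -- Borel-Cantelli
  have hsum : (∑' j, μ (B j)) = ⊤ := by
    simp only [hBval]
    exact ENNReal.tsum_const_eq_top_of_ne_zero hq0
  have hlim := measure_limsup_eq_one hmeas hindepB hsum
  -- conclude
  have hsub : limsup B atTop ⊆
      {ω | ∃ n₀ : ℕ, ∀ n ≥ n₀, randOrbit f g x₀ n ω ∈ Icc a₁ c₁} := by
    intro ω hω
    obtain ⟨j, hj⟩ := (mem_limsup_iff_frequently_mem.mp hω).exists
    have h1 : randOrbit f g x₀ (j * k + k) ω ∈ Icc a₁ c₁ := hL3 (j * k) ω hj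
    refine ⟨j * k + k, fun n hn => ?_⟩
    have : n = (j * k + k) + (n - (j * k + k)) := by omega
    rw [this]
    exact hL2 _ _ ω h1
  exact le_antisymm prob_le_one (hlim ▸ measure_mono hsub)
end

section
/- Let f be a strictly increasing Allee map on [0,b] with threshold A_f and carrying capacity K_f, and let g be a strictly increasing Allee map on [0,b] with threshold A_g and carrying capacity K_g, where A_f < A_g < K_f < K_g. If x₀ ∈ [0, A_f], then μ({ω : the sequence n ↦ X n ω converges to 0}) = 1. -/
open MeasureTheory ProbabilityTheory Filter Set

/-- `f` is a strictly increasing Allee map on `[0, b]` with threshold `A` and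
carrying capacity `K`. -/
def IsIncAlleeMap (b A K : ℝ) (f : ℝ → ℝ) : Prop :=
  0 < A ∧ A < K ∧ K < b ∧
  MapsTo f (Icc 0 b) (Icc 0 b) ∧
  ContinuousOn f (Icc 0 b) ∧
  StrictMonoOn f (Icc 0 b) ∧
  f 0 = 0 ∧ f A = A ∧ f K = K ∧
  (∀ x ∈ Ioo 0 A ∪ Ioc K b, f x < x) ∧
  (∀ x ∈ Ioo A K, x < f x)

theorem stmt2
    (b Af Kf Ag Kg : ℝ) (hb : 0 < b)
    (f g : ℝ → ℝ)
    (hf : IsIncAlleeMap b Af Kf f) (hg : IsIncAlleeMap b Ag Kg g)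
    (horder : Af < Ag ∧ Ag < Kf ∧ Kf < Kg)
    (p : ℝ) (hp : p ∈ Ioo (0 : ℝ) 1)
    (μ : Measure (ℕ → Bool)) [IsProbabilityMeasure μ]
    (hindep : iIndepFun (fun n (ω : ℕ → Bool) => ω n) μ)
    (hcoin : ∀ n, μ {ω | ω n = true} = ENNReal.ofReal p)
    (x₀ : ℝ) (hx₀ : x₀ ∈ Icc 0 Af) :
    μ {ω | Tendsto (fun n => randOrbit f g x₀ n ω) atTop (nhds 0)} = 1 := by
  obtain ⟨hAf, hAfKf, hKfb, hfmaps, hfcont, hfmono, hf0, hfA, hfK, hflt, hfgt⟩ := hf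
  obtain ⟨hAg, hAgKg, hKgb, hgmaps, hgcont, hgmono, hg0, hgA, hgK, hglt, hggt⟩ := hg
  obtain ⟨hAfAg, hAgKf, hKfKg⟩ := horder
  have hAfb : Af < b := hAfKf.trans hKfb
  have hAgb : Ag < b := lt_trans hAgKf hKfb
  -- basic facts about f and g on [0, Af]
  have hfnn : ∀ x ∈ Icc (0:ℝ) Af, 0 ≤ f x := by
    intro x hx
    rw [← hf0]
    rcases eq_or_lt_of_le hx.1 with h | h
    · rw [← h]
    · exact le_of_lt (hfmono ⟨le_refl 0, hb.le⟩ ⟨hx.1, hx.2.trans hAfb.le⟩ h)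
  have hfle : ∀ x ∈ Icc (0:ℝ) Af, f x ≤ x := by
    intro x hx
    rcases eq_or_lt_of_le hx.1 with h | h
    · rw [← h, hf0]
    · rcases eq_or_lt_of_le hx.2 with h2 | h2
      · rw [h2, hfA]
      · exact (hflt x (Or.inl ⟨h, h2⟩)).le
  have hgnn : ∀ x ∈ Icc (0:ℝ) Af, 0 ≤ g x := by
    intro x hx
    rw [← hg0]
    rcases eq_or_lt_of_le hx.1 with h | h
    · rw [← h]
    · exact le_of_lt (hgmono ⟨le_refl 0, hb.le⟩ ⟨hx.1, hx.2.trans hAfb.le⟩ h)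
  have hglt' : ∀ x ∈ Icc (0:ℝ) Af, 0 < x → g x < x := by
    intro x hx hx0
    exact hglt x (Or.inl ⟨hx0, lt_of_le_of_lt hx.2 hAfAg⟩)
  have hgle : ∀ x ∈ Icc (0:ℝ) Af, g x ≤ x := by
    intro x hx
    rcases eq_or_lt_of_le hx.1 with h | h
    · rw [← h, hg0]
    · exact (hglt' x hx h).le
  -- the orbit stays in [0, Af] and is antitone
  have horb_mem : ∀ ω n, randOrbit f g x₀ n ω ∈ Icc (0:ℝ) Af := by
    intro ω n
    induction n with
    | zero => exact hx₀
    | succ n ih =>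
      show (if ω n then f (randOrbit f g x₀ n ω) else g (randOrbit f g x₀ n ω)) ∈ _
      split
      · exact ⟨hfnn _ ih, (hfle _ ih).trans ih.2⟩
      · exact ⟨hgnn _ ih, (hgle _ ih).trans ih.2⟩
  have horb_anti : ∀ ω, Antitone (fun n => randOrbit f g x₀ n ω) := by
    intro ω
    apply antitone_nat_of_succ_le
    intro n
    show (if ω n then f (randOrbit f g x₀ n ω) else g (randOrbit f g x₀ n ω)) ≤ _
    split
    · exact hfle _ (horb_mem ω n)
    · exact hgle _ (horb_mem ω n)
  -- deterministic convergence given one false coin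
  have hdet : ∀ ω : ℕ → Bool, (∃ n, ω n = false) →
      Tendsto (fun n => randOrbit f g x₀ n ω) atTop (nhds 0) := by
    intro ω ⟨n₀, hn₀⟩
    have hbdd : BddBelow (range fun n => randOrbit f g x₀ n ω) := by
      refine ⟨0, ?_⟩
      rintro _ ⟨n, rfl⟩
      exact (horb_mem ω n).1
    set L := ⨅ n, randOrbit f g x₀ n ω with hL
    have htend : Tendsto (fun n => randOrbit f g x₀ n ω) atTop (nhds L) :=
      tendsto_atTop_ciInf (horb_anti ω) hbdd
    have hL0 : 0 ≤ L := le_ciInf fun n => (horb_mem ω n).1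
    rcases eq_or_lt_of_le hL0 with h | hLpos
    · rwa [← h] at htend
    exfalso
    -- L < Af using the false coin
    have hstep : randOrbit f g x₀ (n₀ + 1) ω = g (randOrbit f g x₀ n₀ ω) := by
      show (if ω n₀ then _ else _) = _
      rw [hn₀]; simp
    have hLle : L ≤ randOrbit f g x₀ (n₀ + 1) ω := ciInf_le hbdd _
    have hLAf : L < Af := by
      rcases eq_or_lt_of_le (horb_mem ω n₀).1 with h | h
      · exfalso
        have : randOrbit f g x₀ (n₀ + 1) ω = 0 := by rw [hstep, ← h, hg0]
        exact absurd (hLle.trans_eq this) (not_le.2 hLpos)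
      · calc L ≤ g (randOrbit f g x₀ n₀ ω) := hstep ▸ hLle
          _ < randOrbit f g x₀ n₀ ω := hglt' _ (horb_mem ω n₀) h
          _ ≤ Af := (horb_mem ω n₀).2
    -- continuity at L
    have hLmem : Icc (0:ℝ) b ∈ nhds L :=
      Icc_mem_nhds hLpos (hLAf.trans hAfb)
    have hfc : ContinuousAt f L := hfcont.continuousAt hLmem
    have hgc : ContinuousAt g L := hgcont.continuousAt hLmem
    have hmaxc : ContinuousAt (fun x => max (f x) (g x)) L := hfc.max hgc
    have hcomp : Tendsto (fun n => max (f (randOrbit f g x₀ n ω)) (g (randOrbit f g x₀ n ω)))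
        atTop (nhds (max (f L) (g L))) := hmaxc.tendsto.comp htend
    have hsucc : Tendsto (fun n => randOrbit f g x₀ (n + 1) ω) atTop (nhds L) :=
      htend.comp (tendsto_add_atTop_nat 1)
    have hle : L ≤ max (f L) (g L) := by
      refine le_of_tendsto_of_tendsto' hsucc hcomp fun n => ?_
      show (if ω n then f (randOrbit f g x₀ n ω) else g (randOrbit f g x₀ n ω)) ≤ _
      split
      · exact le_max_left _ _
      · exact le_max_right _ _
    have hfL : f L < L := hflt L (Or.inl ⟨hLpos, hLAf⟩)
    have hgL : g L < L := hglt L (Or.inl ⟨hLpos, hLAf.trans hAfAg⟩)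
    exact absurd hle (not_le.2 (max_lt hfL hgL))
  -- the all-true event has measure zero
  have hmeas_true : ∀ n : ℕ, MeasurableSet[(inferInstance : MeasurableSpace Bool).comap
      (fun ω : ℕ → Bool => ω n)] {ω : ℕ → Bool | ω n = true} := by
    intro n
    exact ⟨{true}, trivial, by ext ω; simp⟩
  have halltrue : μ {ω : ℕ → Bool | ∀ n, ω n = true} = 0 := by
    have hN : ∀ N : ℕ, μ {ω : ℕ → Bool | ∀ n, ω n = true} ≤ ENNReal.ofReal p ^ N := by
      intro N
      have hsub : {ω : ℕ → Bool | ∀ n, ω n = true} ⊆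
          ⋂ n ∈ Finset.range N, {ω : ℕ → Bool | ω n = true} := by
        intro ω hω
        simp only [mem_iInter]
        intro n _
        exact hω n
      calc μ {ω : ℕ → Bool | ∀ n, ω n = true}
          ≤ μ (⋂ n ∈ Finset.range N, {ω : ℕ → Bool | ω n = true}) := measure_mono hsub
        _ = ∏ n ∈ Finset.range N, μ {ω : ℕ → Bool | ω n = true} :=
            hindep.meas_biInter fun n _ => hmeas_true n
        _ = ENNReal.ofReal p ^ N := by
            simp only [hcoin, Finset.prod_const, Finset.card_range]
    have hplt : ENNReal.ofReal p < 1 := by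
      rw [← ENNReal.ofReal_one]
      exact ENNReal.ofReal_lt_ofReal_iff_of_nonneg hp.1.le |>.2 hp.2
    have htend0 : Tendsto (fun N => ENNReal.ofReal p ^ N) atTop (nhds 0) :=
      ENNReal.tendsto_pow_atTop_nhds_zero_of_lt_one hplt
    exact le_antisymm (ge_of_tendsto' htend0 hN |>.trans (le_refl 0)) (zero_le (a := μ {ω : ℕ → Bool | ∀ n, ω n = true}))
  -- conclude
  have hsub : {ω : ℕ → Bool | ∃ n, ω n = false} ⊆
      {ω | Tendsto (fun n => randOrbit f g x₀ n ω) atTop (nhds 0)} :=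
    fun ω hω => hdet ω hω
  have hcover : (univ : Set (ℕ → Bool)) ⊆
      {ω | Tendsto (fun n => randOrbit f g x₀ n ω) atTop (nhds 0)} ∪
      {ω : ℕ → Bool | ∀ n, ω n = true} := by
    intro ω _
    by_cases h : ∀ n, ω n = true
    · exact Or.inr h
    · left
      apply hsub
      push_neg at h
      obtain ⟨n, hn⟩ := h
      exact ⟨n, Bool.not_eq_true _ ▸ hn⟩
  have h1 : (1 : ENNReal) ≤ μ {ω | Tendsto (fun n => randOrbit f g x₀ n ω) atTop (nhds 0)} := by
    calc (1 : ENNReal) = μ univ := (measure_univ).symm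
      _ ≤ μ ({ω | Tendsto (fun n => randOrbit f g x₀ n ω) atTop (nhds 0)} ∪
          {ω : ℕ → Bool | ∀ n, ω n = true}) := measure_mono hcover
      _ ≤ μ {ω | Tendsto (fun n => randOrbit f g x₀ n ω) atTop (nhds 0)} +
          μ {ω : ℕ → Bool | ∀ n, ω n = true} := measure_union_le _ _
      _ = μ {ω | Tendsto (fun n => randOrbit f g x₀ n ω) atTop (nhds 0)} := by
          rw [halltrue, add_zero]
  exact le_antisymm prob_le_one h1
end

section
/- Let f be a strictly increasing Allee map on [0,b] with threshold A_f and carrying capacity K_f, and let g be a strictly increasing Allee map on [0,b] with threshold A_g and carrying capacity K_g, where A_f < A_g < K_f < K_g. If x₀ ∈ [A_g, b], then μ({ω : ∃ n₀ ∈ ℕ, ∀ n ≥ n₀, X n ω ∈ [K_f, K_g]}) = 1. -/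
open MeasureTheory ProbabilityTheory Filter Set Topology
open scoped ENNReal

/-- Deterministic absorption lemma: if the coin sequence shows `true` infinitely often and
`false` infinitely often, the orbit is eventually absorbed in `[Kf, Kg]`. -/
lemma orbit_absorbed
    (b Af Kf Ag Kg : ℝ)
    (f g : ℝ → ℝ)
    (hf : IsIncAlleeMap b Af Kf f) (hg : IsIncAlleeMap b Ag Kg g)
    (horder : Af < Ag ∧ Ag < Kf ∧ Kf < Kg)
    (x₀ : ℝ) (hx₀ : x₀ ∈ Icc Ag b)
    (ω : ℕ → Bool)
    (htrue : ∀ N : ℕ, ∃ n, N ≤ n ∧ ω n = true)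
    (hfalse : ∀ N : ℕ, ∃ n, N ≤ n ∧ ω n = false) :
    ∃ n₀ : ℕ, ∀ n ≥ n₀, randOrbit f g x₀ n ω ∈ Icc Kf Kg := by
  obtain ⟨hAf0, hAfKf, hKfb, fmap, fcont, fmono, hf0, hfA, hfK, hflt, hfgt⟩ := hf
  obtain ⟨hAg0, hAgKg, hKgb, gmap, gcont, gmono, hg0, hgA, hgK, hglt, hggt⟩ := hg
  obtain ⟨hAfAg, hAgKf, hKfKg⟩ := horder
  set x : ℕ → ℝ := fun n => randOrbit f g x₀ n ω with hxdef
  have hstep : ∀ n, x (n + 1) = if ω n then f (x n) else g (x n) := fun n => rfl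
  -- the interval [Ag, b] is invariant
  have hx : ∀ n, x n ∈ Icc Ag b := by
    intro n
    induction n with
    | zero => exact hx₀
    | succ n ih =>
      rw [hstep]
      have h0b : x n ∈ Icc 0 b := ⟨by linarith [ih.1], ih.2⟩
      have hAg0b : Ag ∈ Icc (0:ℝ) b := ⟨by linarith, by linarith⟩
      by_cases hωn : ω n = true
      · rw [if_pos hωn]
        have h1 : f Ag ∈ Icc Af Kf → True := fun _ => trivial
        have hfAg : Ag < f Ag := hfgt Ag ⟨hAfAg, hAgKf⟩
        have : f Ag ≤ f (x n) := fmono.monotoneOn hAg0b h0b ih.1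
        exact ⟨by linarith, (fmap h0b).2⟩
      · rw [if_neg hωn]
        have : g Ag ≤ g (x n) := gmono.monotoneOn hAg0b h0b ih.1
        rw [hgA] at this
        exact ⟨this, (gmap h0b).2⟩
  -- step 2: eventually the orbit is ≤ Kg
  have step2 : ∃ n₁, x n₁ ≤ Kg := by
    by_contra h
    push_neg at h
    -- decreasing
    have hdec1 : ∀ n, x (n + 1) ≤ x n := by
      intro n
      rw [hstep]
      by_cases hωn : ω n = true
      · rw [if_pos hωn]
        exact (hflt (x n) (Or.inr ⟨by linarith [h n], (hx n).2⟩)).le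
      · rw [if_neg hωn]
        exact (hglt (x n) (Or.inr ⟨h n, (hx n).2⟩)).le
    have hdec : Antitone x := antitone_nat_of_succ_le hdec1
    -- uniform decrease at f steps
    obtain ⟨z, hz, hzmin⟩ := isCompact_Icc.exists_isMinOn (nonempty_Icc.2 hKgb.le)
      (continuousOn_id.sub (fcont.mono (fun y hy => ⟨by linarith [hy.1], hy.2⟩)))
    have hδ : 0 < z - f z := by
      have := hflt z (Or.inr ⟨by linarith [hz.1], hz.2⟩)
      linarith
    set δ := z - f z with hδdef
    have hfdrop : ∀ n, ω n = true → x (n + 1) ≤ x n - δ := by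
      intro n hωn
      have hmem : x n ∈ Icc Kg b := ⟨(h n).le, (hx n).2⟩
      have := hzmin hmem
      simp only [id, Set.mem_setOf_eq, Pi.sub_apply] at this
      rw [hstep, if_pos hωn]
      linarith
    have key : ∀ k : ℕ, ∃ n, x n ≤ x 0 - (k : ℝ) * δ := by
      intro k
      induction k with
      | zero => exact ⟨0, by simp⟩
      | succ k ih =>
        obtain ⟨n, hn⟩ := ih
        obtain ⟨m, hm, hmt⟩ := htrue n
        have h1 : x m ≤ x n := hdec hm
        have h2 := hfdrop m hmt
        exact ⟨m + 1, by push_cast; linarith⟩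
    obtain ⟨k, hk⟩ := exists_nat_gt ((x 0 - Kg) / δ)
    obtain ⟨n, hn⟩ := key k
    have : x 0 - Kg < k * δ := by
      rw [div_lt_iff₀ hδ] at hk
      linarith
    linarith [h n]
  obtain ⟨n₁, hn₁⟩ := step2
  -- step 3: remains ≤ Kg
  have step3 : ∀ n, n₁ ≤ n → x n ≤ Kg := by
    intro n hn
    induction n, hn using Nat.le_induction with
    | base => exact hn₁
    | succ n hn ih =>
      rw [hstep]
      have h0b : x n ∈ Icc 0 b := ⟨by linarith [(hx n).1], (hx n).2⟩
      have hKg0b : Kg ∈ Icc (0:ℝ) b := ⟨by linarith, hKgb.le⟩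
      by_cases hωn : ω n = true
      · rw [if_pos hωn]
        have h1 : f (x n) ≤ f Kg := fmono.monotoneOn h0b hKg0b ih
        have h2 : f Kg < Kg := hflt Kg (Or.inr ⟨hKfKg, hKgb.le⟩)
        linarith
      · rw [if_neg hωn]
        have h1 : g (x n) ≤ g Kg := gmono.monotoneOn h0b hKg0b ih
        rw [hgK] at h1
        exact h1
  -- step 4: eventually ≥ Kf
  have step4 : ∃ n₂, n₁ ≤ n₂ ∧ Kf ≤ x n₂ := by
    by_contra h
    push_neg at h
    -- choose c ∈ (Ag, Kf) with g c > Kf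
    obtain ⟨c, hcmem, hgc⟩ : ∃ c ∈ Ioo Ag Kf, Kf < g c := by
      have hKf0b : Kf ∈ Icc (0:ℝ) b := ⟨by linarith, hKfb.le⟩
      have hcont : ContinuousWithinAt g (Icc 0 b) Kf := gcont Kf hKf0b
      have hgKf : Kf < g Kf := hggt Kf ⟨hAgKf, hKfKg⟩
      have hev : ∀ᶠ y in 𝓝[Icc 0 b] Kf, Kf < g y :=
        hcont (Ioi_mem_nhds hgKf)
      have hle : 𝓝[Ioo Ag Kf] Kf ≤ 𝓝[Icc 0 b] Kf :=
        nhdsWithin_mono _ (fun y hy => ⟨by linarith [hy.1], by linarith [hy.2]⟩)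
      have hne : (𝓝[Ioo Ag Kf] Kf).NeBot := by
        rw [← mem_closure_iff_nhdsWithin_neBot, closure_Ioo (by linarith : Ag ≠ Kf)]
        exact ⟨hAgKf.le, le_refl _⟩
      have hev' : ∀ᶠ y in 𝓝[Ioo Ag Kf] Kf, Kf < g y := hle hev
      obtain ⟨c, hc1, hc2⟩ := (hev'.and self_mem_nhdsWithin).exists
      exact ⟨c, hc2, hc1⟩
    -- nondecreasing from n₁
    have hmono : ∀ m n, n₁ ≤ m → m ≤ n → x m ≤ x n := by
      intro m n hm hmn
      induction n, hmn using Nat.le_induction with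
      | base => exact le_refl _
      | succ n hmn ih =>
        have hn1 : n₁ ≤ n := le_trans hm hmn
        have hlt : x n < Kf := h n hn1
        refine le_trans ih ?_
        rw [hstep]
        by_cases hωn : ω n = true
        · rw [if_pos hωn]
          exact (hfgt (x n) ⟨by linarith [(hx n).1], hlt⟩).le
        · rw [if_neg hωn]
          rcases eq_or_lt_of_le (hx n).1 with heq | hlt2
          · rw [← heq, hgA]
          · exact (hggt (x n) ⟨hlt2, by linarith⟩).le
    -- the orbit never reaches [c, Kf)
    have hltc : ∀ n, n₁ ≤ n → x n < c := by
      by_contra hc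
      push_neg at hc
      obtain ⟨n, hn, hcn⟩ := hc
      obtain ⟨m, hm, hmf⟩ := hfalse n
      have h1 : c ≤ x m := le_trans hcn (hmono n m hn hm)
      have h2 : g c ≤ g (x m) := gmono.monotoneOn
        ⟨by linarith [hcmem.1], by linarith [hcmem.2]⟩
        ⟨by linarith [(hx m).1], (hx m).2⟩ h1
      have h3 : x (m + 1) = g (x m) := by
        rw [hstep, if_neg (by simp [hmf])]
      have h4 : x (m + 1) < Kf := h (m + 1) (by omega)
      linarith
    -- uniform increase at f steps on [Ag, c]
    obtain ⟨z, hz, hzmin⟩ := isCompact_Icc.exists_isMinOn (nonempty_Icc.2 hcmem.1.le)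
      ((fcont.mono (fun y hy => ⟨by linarith [hy.1], by linarith [hy.2, hcmem.2]⟩)).sub
        continuousOn_id)
    have hδ : 0 < f z - z := by
      have := hfgt z ⟨by linarith [hz.1], by linarith [hz.2, hcmem.2]⟩
      linarith
    set δ := f z - z with hδdef
    have hfup : ∀ n, n₁ ≤ n → ω n = true → x n + δ ≤ x (n + 1) := by
      intro n hn hωn
      have hmem : x n ∈ Icc Ag c := ⟨(hx n).1, (hltc n hn).le⟩
      have := hzmin hmem
      simp only [id, Set.mem_setOf_eq, Pi.sub_apply] at this
      rw [hstep, if_pos hωn]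
      linarith
    have key : ∀ k : ℕ, ∃ n, n₁ ≤ n ∧ x n₁ + (k : ℝ) * δ ≤ x n := by
      intro k
      induction k with
      | zero => exact ⟨n₁, le_refl _, by simp⟩
      | succ k ih =>
        obtain ⟨n, hn, hxn⟩ := ih
        obtain ⟨m, hm, hmt⟩ := htrue n
        have h1 : x n ≤ x m := hmono n m hn hm
        have h2 := hfup m (le_trans hn hm) hmt
        exact ⟨m + 1, by omega, by push_cast; linarith⟩
    obtain ⟨k, hk⟩ := exists_nat_gt ((c - x n₁) / δ)
    obtain ⟨n, hn, hxn⟩ := key k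
    have : c - x n₁ < k * δ := by
      rw [div_lt_iff₀ hδ] at hk
      linarith
    linarith [hltc n hn]
  obtain ⟨n₂, hn₂, hxn₂⟩ := step4
  -- [Kf, Kg] is invariant
  have inv : ∀ y ∈ Icc Kf Kg, f y ∈ Icc Kf Kg ∧ g y ∈ Icc Kf Kg := by
    intro y hy
    have h0b : y ∈ Icc (0:ℝ) b := ⟨by linarith [hy.1], by linarith [hy.2]⟩
    have hKf0b : Kf ∈ Icc (0:ℝ) b := ⟨by linarith, hKfb.le⟩
    have hKg0b : Kg ∈ Icc (0:ℝ) b := ⟨by linarith, hKgb.le⟩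
    constructor
    · constructor
      · have := fmono.monotoneOn hKf0b h0b hy.1
        rw [hfK] at this
        exact this
      · have h1 := fmono.monotoneOn h0b hKg0b hy.2
        have h2 : f Kg < Kg := hflt Kg (Or.inr ⟨hKfKg, hKgb.le⟩)
        linarith
    · constructor
      · have h1 := gmono.monotoneOn hKf0b h0b hy.1
        have h2 : Kf < g Kf := hggt Kf ⟨hAgKf, hKfKg⟩
        linarith
      · have := gmono.monotoneOn h0b hKg0b hy.2
        rw [hgK] at this
        exact this
  refine ⟨n₂, ?_⟩
  intro n hn
  induction n, hn using Nat.le_induction with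
  | base => exact ⟨hxn₂, step3 n₂ hn₂⟩
  | succ n hn ih =>
    show x (n + 1) ∈ Icc Kf Kg
    rw [hstep]
    by_cases hωn : ω n = true
    · rw [if_pos hωn]
      exact (inv _ ih).1
    · rw [if_neg hωn]
      exact (inv _ ih).2

theorem stmt3
    (b Af Kf Ag Kg : ℝ) (hb : 0 < b)
    (f g : ℝ → ℝ)
    (hf : IsIncAlleeMap b Af Kf f) (hg : IsIncAlleeMap b Ag Kg g)
    (horder : Af < Ag ∧ Ag < Kf ∧ Kf < Kg)
    (p : ℝ) (hp : p ∈ Ioo (0 : ℝ) 1)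
    (μ : Measure (ℕ → Bool)) [IsProbabilityMeasure μ]
    (hindep : iIndepFun (fun n ω => ω n) μ)
    (hcoin : ∀ n, μ {ω | ω n = true} = ENNReal.ofReal p)
    (x₀ : ℝ) (hx₀ : x₀ ∈ Icc Ag b) :
    μ {ω | ∃ n₀ : ℕ, ∀ n ≥ n₀, randOrbit f g x₀ n ω ∈ Icc Kf Kg} = 1 := by
  -- measure of single-coordinate events
  have hmeas : ∀ (n : ℕ) (v : Bool), MeasurableSet {ω : ℕ → Bool | ω n = v} := by
    intro n v
    have : {ω : ℕ → Bool | ω n = v} = (fun ω : ℕ → Bool => ω n) ⁻¹' {v} := by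
      ext ω; simp
    rw [this]
    exact (measurable_pi_apply n) (measurableSet_singleton v)
  have hcoinv : ∀ (n : ℕ) (v : Bool),
      μ {ω : ℕ → Bool | ω n = v} = if v then ENNReal.ofReal p else ENNReal.ofReal (1 - p) := by
    intro n v
    cases v
    · simp only [if_false, Bool.false_eq_true]
      have hcompl : {ω : ℕ → Bool | ω n = false} = {ω : ℕ → Bool | ω n = true}ᶜ := by
        ext ω; simp
      rw [hcompl, measure_compl (hmeas n true) (measure_ne_top μ _), hcoin, measure_univ]
      rw [ENNReal.ofReal_sub 1 hp.1.le, ENNReal.ofReal_one]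
    · simp [hcoin n]
  -- tail events have measure zero
  have tail0 : ∀ (v : Bool) (r : ℝ≥0∞), r < 1 → (∀ n, μ {ω : ℕ → Bool | ω n = v} = r) →
      μ {ω : ℕ → Bool | ∃ N, ∀ n, N ≤ n → ω n = v} = 0 := by
    intro v r hr hcv
    have hCN : ∀ N : ℕ, μ {ω : ℕ → Bool | ∀ n, N ≤ n → ω n = v} = 0 := by
      intro N
      have hle : ∀ k : ℕ, μ {ω : ℕ → Bool | ∀ n, N ≤ n → ω n = v} ≤ r ^ k := by
        intro k
        have hsub : {ω : ℕ → Bool | ∀ n, N ≤ n → ω n = v} ⊆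
            ⋂ i ∈ Finset.Ico N (N + k), {ω : ℕ → Bool | ω i = v} := by
          intro ω hω
          simp only [Set.mem_iInter, Finset.mem_Ico]
          intro i hi
          exact hω i hi.1
        refine le_trans (measure_mono hsub) ?_
        have := hindep.meas_biInter (S := Finset.Ico N (N + k))
          (s := fun i => {ω : ℕ → Bool | ω i = v}) ?_
        · rw [this]
          rw [Finset.prod_congr rfl (fun i _ => hcv i), Finset.prod_const,
            Nat.card_Ico]
          simp
        · intro i _
          rw [MeasurableSpace.measurableSet_comap]
          exact ⟨{v}, trivial, by ext ω; simp⟩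
      have htend : Tendsto (fun k : ℕ => r ^ k) atTop (𝓝 0) :=
        ENNReal.tendsto_pow_atTop_nhds_zero_of_lt_one hr
      have := ge_of_tendsto' htend hle
      exact le_antisymm this zero_le
    have hunion : {ω : ℕ → Bool | ∃ N, ∀ n, N ≤ n → ω n = v} =
        ⋃ N : ℕ, {ω : ℕ → Bool | ∀ n, N ≤ n → ω n = v} := by
      ext ω; simp
    rw [hunion]
    refine le_antisymm (le_trans (measure_iUnion_le _) ?_) zero_le
    simp [hCN]
  -- the two "infinitely often" events
  set T := {ω : ℕ → Bool | ∀ N : ℕ, ∃ n, N ≤ n ∧ ω n = true} with hTdef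
  set F := {ω : ℕ → Bool | ∀ N : ℕ, ∃ n, N ≤ n ∧ ω n = false} with hFdef
  have hTc : μ Tᶜ = 0 := by
    have : Tᶜ = {ω : ℕ → Bool | ∃ N, ∀ n, N ≤ n → ω n = false} := by
      ext ω
      simp only [hTdef, Set.mem_compl_iff, Set.mem_setOf_eq]
      push_neg
      constructor
      · rintro ⟨N, hN⟩
        exact ⟨N, fun n hn => Bool.not_eq_true _ |>.mp (hN n hn)⟩
      · rintro ⟨N, hN⟩
        exact ⟨N, fun n hn => by simp [hN n hn]⟩
    rw [this]
    refine tail0 false (ENNReal.ofReal (1 - p)) ?_ (fun n => by simpa using hcoinv n false)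
    rw [ENNReal.ofReal_lt_one]
    linarith [hp.1]
  have hFc : μ Fᶜ = 0 := by
    have : Fᶜ = {ω : ℕ → Bool | ∃ N, ∀ n, N ≤ n → ω n = true} := by
      ext ω
      simp only [hFdef, Set.mem_compl_iff, Set.mem_setOf_eq]
      push_neg
      constructor
      · rintro ⟨N, hN⟩
        exact ⟨N, fun n hn => by simpa using hN n hn⟩
      · rintro ⟨N, hN⟩
        exact ⟨N, fun n hn => by simp [hN n hn]⟩
    rw [this]
    refine tail0 true (ENNReal.ofReal p) ?_ (fun n => by simpa using hcoinv n true)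
    rw [ENNReal.ofReal_lt_one]
    exact hp.2
  -- combine
  have hsub : T ∩ F ⊆ {ω | ∃ n₀ : ℕ, ∀ n ≥ n₀, randOrbit f g x₀ n ω ∈ Icc Kf Kg} := by
    rintro ω ⟨hT, hF⟩
    exact orbit_absorbed b Af Kf Ag Kg f g hf hg horder x₀ hx₀ ω hT hF
  have h1 : (1 : ℝ≥0∞) ≤ μ (T ∩ F) := by
    have h2 : μ (univ : Set (ℕ → Bool)) ≤ μ (univ ∩ (T ∩ F)) + μ (univ \ (T ∩ F)) :=
      measure_le_inter_add_diff μ univ (T ∩ F)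
    rw [measure_univ, Set.univ_inter, ← Set.compl_eq_univ_diff] at h2
    have h3 : μ (T ∩ F)ᶜ = 0 := by
      rw [Set.compl_inter]
      exact le_antisymm (le_trans (measure_union_le _ _) (by rw [hTc, hFc]; simp)) zero_le
    rw [h3, add_zero] at h2
    exact h2
  exact le_antisymm prob_le_one (le_trans h1 (measure_mono hsub))
end

section
/- Let f be a strictly increasing Allee map on [0,b] with threshold A_f and carrying capacity K_f, and let g be a strictly increasing Allee map on [0,b] with threshold A_g and carrying capacity K_g, where A_f < A_g < K_f < K_g. If x₀ ∈ (A_f, A_g), then, setting p₀ = μ({ω : the sequence n ↦ X n ω converges to 0}) and p₁ = μ({ω : ∃ n₀ ∈ ℕ, ∀ n ≥ n₀, X n ω ∈ [K_f, K_g]}), we have p₀ > 0, p₁ > 0 and p₀ + p₁ = 1. -/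
open MeasureTheory ProbabilityTheory Filter Set

open Topology

namespace Stmt4Aux

/-- Orbit along a finite word of coin flips. -/
def wOrbit (f g : ℝ → ℝ) : List Bool → ℝ → ℝ
  | [], x => x
  | c :: w, x => wOrbit f g w (if c then f x else g x)

variable {f g : ℝ → ℝ}

lemma wOrbit_append (w₁ w₂ : List Bool) (x : ℝ) :
    wOrbit f g (w₁ ++ w₂) x = wOrbit f g w₂ (wOrbit f g w₁ x) := by
  induction w₁ generalizing x with
  | nil => rfl
  | cons c w ih => simp only [List.cons_append, wOrbit]; exact ih _

lemma randOrbit_eq_wOrbit (x₀ : ℝ) (n : ℕ) (ω : ℕ → Bool) :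
    randOrbit f g x₀ n ω = wOrbit f g (List.ofFn fun i : Fin n => ω i) x₀ := by
  induction n with
  | zero => rfl
  | succ n ih =>
    rw [List.ofFn_succ', List.concat_eq_append, wOrbit_append]
    have : (List.ofFn fun i : Fin n => ω ((Fin.castSucc i) : ℕ)) =
        (List.ofFn fun i : Fin n => ω i) := by simp
    show randOrbit f g x₀ (n+1) ω = _
    simp only [randOrbit, this, ← ih]
    rfl

lemma randOrbit_add (x₀ : ℝ) (n m : ℕ) (ω : ℕ → Bool) :
    randOrbit f g x₀ (n + m) ω
      = randOrbit f g (randOrbit f g x₀ n ω) m (fun i => ω (n + i)) := by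
  induction m with
  | zero => rfl
  | succ m ih =>
    show randOrbit f g x₀ ((n + m) + 1) ω = _
    simp only [randOrbit, ih]

lemma wOrbit_replicate_false (n : ℕ) (x : ℝ) :
    wOrbit f g (List.replicate n false) x = g^[n] x := by
  induction n generalizing x with
  | zero => rfl
  | succ n ih =>
    rw [List.replicate_succ]
    show wOrbit f g (List.replicate n false) (g x) = _
    rw [ih, ← Function.iterate_succ_apply]

lemma randOrbit_const_run (c : Bool) (x : ℝ) (N : ℕ) (ω : ℕ → Bool)
    (hω : ∀ i < N, ω i = c) (n : ℕ) (hn : n ≤ N) :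
    randOrbit f g x n ω = (if c then f else g)^[n] x := by
  induction n with
  | zero => rfl
  | succ n ih =>
    show (if ω n then f _ else g _) = _
    rw [hω n (lt_of_lt_of_le (Nat.lt_succ_self n) hn), ih (le_trans (Nat.le_succ n) hn),
      Function.iterate_succ_apply']
    cases c <;> simp

section OneMap

variable {b A K : ℝ} {h : ℝ → ℝ}

lemma iter_to_lo (hh : IsIncAlleeMap b A K h) {x : ℝ} (hx : x ∈ Ioo 0 A) :
    (∀ n, h^[n] x ∈ Ioo 0 A) ∧ Tendsto (fun n => h^[n] x) atTop (𝓝 0) := by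
  obtain ⟨hA, hAK, hKb, hmaps, hcont, hmono, h0, hfixA, hfixK, hlt, hgt⟩ := hh
  have hb : (0:ℝ) < b := by linarith
  have hstep : ∀ y ∈ Ioo 0 A, h y ∈ Ioo 0 A := by
    intro y hy
    refine ⟨?_, lt_trans (hlt y (Or.inl hy)) hy.2⟩
    calc (0:ℝ) = h 0 := h0.symm
      _ < h y := hmono ⟨le_rfl, hb.le⟩ ⟨hy.1.le, by linarith [hy.2]⟩ hy.1
  have hinv : ∀ n, h^[n] x ∈ Ioo 0 A := by
    intro n; induction n with
    | zero => exact hx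
    | succ n ih => rw [Function.iterate_succ_apply']; exact hstep _ ih
  refine ⟨hinv, ?_⟩
  have hanti : Antitone (fun n => h^[n] x) :=
    antitone_nat_of_succ_le fun n => by
      rw [Function.iterate_succ_apply']; exact (hlt _ (Or.inl (hinv n))).le
  have hbdd : BddBelow (range fun n => h^[n] x) :=
    ⟨0, by rintro z ⟨n, rfl⟩; exact (hinv n).1.le⟩
  have htend := tendsto_atTop_ciInf hanti hbdd
  set ℓ := ⨅ n, h^[n] x with hldef
  have hl0 : 0 ≤ ℓ := le_ciInf fun n => (hinv n).1.le
  have hlA : ℓ < A := by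
    have := ciInf_le hbdd 0
    simpa using lt_of_le_of_lt this hx.2
  rcases eq_or_lt_of_le hl0 with heq | hpos
  · rwa [← heq] at htend
  · exfalso
    have hca : ContinuousAt h ℓ := hcont.continuousAt (Icc_mem_nhds hpos (by linarith))
    have h1 : Tendsto (fun n => h (h^[n] x)) atTop (𝓝 (h ℓ)) := hca.tendsto.comp htend
    have h2 : Tendsto (fun n => h (h^[n] x)) atTop (𝓝 ℓ) := by
      have := htend.comp (tendsto_add_atTop_nat 1)
      simpa [Function.comp_def, Function.iterate_succ_apply'] using this
    exact absurd (tendsto_nhds_unique h1 h2) (ne_of_lt (hlt ℓ (Or.inl ⟨hpos, hlA⟩)))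

lemma iter_to_hi (hh : IsIncAlleeMap b A K h) {x : ℝ} (hx : x ∈ Ioo A K) :
    (∀ n, h^[n] x ∈ Ioo A K) ∧ Tendsto (fun n => h^[n] x) atTop (𝓝 K) := by
  obtain ⟨hA, hAK, hKb, hmaps, hcont, hmono, h0, hfixA, hfixK, hlt, hgt⟩ := hh
  have hb : (0:ℝ) < b := by linarith
  have hstep : ∀ y ∈ Ioo A K, h y ∈ Ioo A K := by
    intro y hy
    refine ⟨lt_trans hy.1 (hgt y hy), ?_⟩
    calc h y < h K := hmono ⟨by linarith [hy.1], by linarith [hy.2]⟩ ⟨by linarith, hKb.le⟩ hy.2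
      _ = K := hfixK
  have hinv : ∀ n, h^[n] x ∈ Ioo A K := by
    intro n; induction n with
    | zero => exact hx
    | succ n ih => rw [Function.iterate_succ_apply']; exact hstep _ ih
  refine ⟨hinv, ?_⟩
  have hmono' : Monotone (fun n => h^[n] x) :=
    monotone_nat_of_le_succ fun n => by
      rw [Function.iterate_succ_apply']; exact (hgt _ (hinv n)).le
  have hbdd : BddAbove (range fun n => h^[n] x) :=
    ⟨K, by rintro z ⟨n, rfl⟩; exact (hinv n).2.le⟩
  have htend := tendsto_atTop_ciSup hmono' hbdd
  set ℓ := ⨆ n, h^[n] x with hldef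
  have hlK : ℓ ≤ K := ciSup_le fun n => (hinv n).2.le
  have hlA : A < ℓ := by
    have := le_ciSup hbdd 0
    simp only [Function.iterate_zero_apply] at this
    exact lt_of_lt_of_le hx.1 this
  rcases eq_or_lt_of_le hlK with heq | hlt'
  · rwa [heq] at htend
  · exfalso
    have hca : ContinuousAt h ℓ := hcont.continuousAt (Icc_mem_nhds (by linarith) (by linarith))
    have h1 : Tendsto (fun n => h (h^[n] x)) atTop (𝓝 (h ℓ)) := hca.tendsto.comp htend
    have h2 : Tendsto (fun n => h (h^[n] x)) atTop (𝓝 ℓ) := by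
      have := htend.comp (tendsto_add_atTop_nat 1)
      simpa [Function.comp_def, Function.iterate_succ_apply'] using this
    exact absurd (tendsto_nhds_unique h1 h2) (ne_of_gt (hgt ℓ ⟨hlA, hlt'⟩))

end OneMap


section TwoMaps

variable {b Af Kf Ag Kg : ℝ} {f g : ℝ → ℝ}
variable (hf : IsIncAlleeMap b Af Kf f) (hg : IsIncAlleeMap b Ag Kg g)
variable (hAfAg : Af < Ag) (hAgKf : Ag < Kf) (hKfKg : Kf < Kg)

/-- The open escape region. -/
def Uset (Af Kf : ℝ) : Set ℝ := Iio Af ∪ Ioi Kf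

/-- The trapping region: points below the lower threshold or in the upper trap. -/
def Tset (Af Kf Kg : ℝ) : Set ℝ := Ico 0 Af ∪ Ioc Kf Kg

lemma isOpen_Uset : IsOpen (Uset Af Kf) := isOpen_Iio.union isOpen_Ioi

lemma Tset_subset_Uset : Tset Af Kf Kg ⊆ Uset Af Kf := by
  rintro x (hx | hx)
  · exact Or.inl hx.2
  · exact Or.inr hx.1

include hf hg hAfAg hAgKf hKfKg

lemma mem_Tset_of_Uset {x : ℝ} (hx : x ∈ Icc 0 Kg) (hxU : x ∈ Uset Af Kf) :
    x ∈ Tset Af Kf Kg := by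
  rcases hxU with h | h
  · exact Or.inl ⟨hx.1, h⟩
  · exact Or.inr ⟨h, hx.2⟩

lemma mem_Icc_of_not_Uset {x : ℝ} (hx : x ∈ Icc 0 Kg) (hxU : x ∉ Uset Af Kf) :
    x ∈ Icc Af Kf := by
  simp only [Uset, mem_union, mem_Iio, mem_Ioi, not_or, not_lt] at hxU
  exact ⟨hxU.1, hxU.2⟩

lemma step_Icc0Kg {x : ℝ} (hx : x ∈ Icc 0 Kg) : f x ∈ Icc 0 Kg ∧ g x ∈ Icc 0 Kg := by
  obtain ⟨hA, hAK, hKb, hmaps, hcont, hmono, h0, hfixA, hfixK, hlt, hgt⟩ := hf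
  obtain ⟨hA', hAK', hKb', hmaps', hcont', hmono', h0', hfixA', hfixK', hlt', hgt'⟩ := hg
  have hKgb : Kg < b := hKb'
  have hxb : x ∈ Icc 0 b := ⟨hx.1, by linarith [hx.2]⟩
  have hKgmem : (Kg : ℝ) ∈ Icc 0 b := ⟨by linarith, hKgb.le⟩
  have h0mem : (0 : ℝ) ∈ Icc 0 b := ⟨le_rfl, by linarith⟩
  constructor
  · constructor
    · rw [← h0]; exact (hmono.monotoneOn) h0mem hxb hx.1
    · have h1 : f x ≤ f Kg := (hmono.monotoneOn) hxb hKgmem hx.2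
      have h2 : f Kg < Kg := hlt Kg (Or.inr ⟨by linarith, hKgb.le⟩)
      linarith
  · constructor
    · rw [← h0']; exact (hmono'.monotoneOn) h0mem hxb hx.1
    · have h1 : g x ≤ g Kg := (hmono'.monotoneOn) hxb hKgmem hx.2
      rw [hfixK'] at h1; exact h1

lemma step_Tset {x : ℝ} (hx : x ∈ Tset Af Kf Kg) : f x ∈ Tset Af Kf Kg ∧ g x ∈ Tset Af Kf Kg := by
  obtain ⟨hA, hAK, hKb, hmaps, hcont, hmono, h0, hfixA, hfixK, hlt, hgt⟩ := hf
  obtain ⟨hA', hAK', hKb', hmaps', hcont', hmono', h0', hfixA', hfixK', hlt', hgt'⟩ := hg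
  have hKgb : Kg < b := hKb'
  rcases hx with hx | hx
  · -- x ∈ Ico 0 Af
    rcases eq_or_lt_of_le hx.1 with heq | hpos
    · constructor
      · exact Or.inl (by rw [← heq, h0]; exact ⟨le_rfl, by linarith [hx.2]⟩)
      · exact Or.inl (by rw [← heq, h0']; exact ⟨le_rfl, by linarith [hx.2]⟩)
    · have hxb : x ∈ Icc 0 b := ⟨hx.1, by linarith [hx.2]⟩
      have h0mem : (0 : ℝ) ∈ Icc 0 b := ⟨le_rfl, by linarith⟩
      have hfpos : 0 < f x := by
        rw [← h0]; exact hmono h0mem hxb hpos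
      have hgpos : 0 < g x := by
        rw [← h0']; exact hmono' h0mem hxb hpos
      constructor
      · exact Or.inl ⟨hfpos.le, lt_trans (hlt x (Or.inl ⟨hpos, hx.2⟩)) hx.2⟩
      · exact Or.inl ⟨hgpos.le, lt_trans (hlt' x (Or.inl ⟨hpos, by linarith [hx.2]⟩)) hx.2⟩
  · -- x ∈ Ioc Kf Kg
    have hxb : x ∈ Icc 0 b := ⟨by linarith [hx.1], by linarith [hx.2]⟩
    have hKfmem : (Kf : ℝ) ∈ Icc 0 b := ⟨by linarith, by linarith⟩
    have hKgmem : (Kg : ℝ) ∈ Icc 0 b := ⟨by linarith, hKgb.le⟩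
    constructor
    · refine Or.inr ⟨?_, ?_⟩
      · rw [← hfixK]; exact hmono hKfmem hxb hx.1
      · have := hlt x (Or.inr ⟨hx.1, by linarith [hx.2]⟩)
        linarith [hx.2]
    · rcases eq_or_lt_of_le hx.2 with heq | hlt2
      · refine Or.inr ?_
        rw [heq, hfixK']
        exact ⟨by linarith, le_rfl⟩
      · refine Or.inr ⟨?_, ?_⟩
        · have := hgt' x ⟨by linarith [hx.1], hlt2⟩
          linarith [hx.1]
        · have : g x ≤ g Kg := (hmono'.monotoneOn) hxb hKgmem hx.2
          rw [hfixK'] at this; exact this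

lemma wOrbit_Icc0Kg (w : List Bool) {x : ℝ} (hx : x ∈ Icc 0 Kg) :
    wOrbit f g w x ∈ Icc 0 Kg := by
  induction w generalizing x with
  | nil => exact hx
  | cons c w ih =>
    show wOrbit f g w (if c then f x else g x) ∈ _
    have := step_Icc0Kg hf hg hAfAg hAgKf hKfKg hx
    cases c
    · exact ih this.2
    · exact ih this.1

lemma wOrbit_Tset (w : List Bool) {x : ℝ} (hx : x ∈ Tset Af Kf Kg) :
    wOrbit f g w x ∈ Tset Af Kf Kg := by
  induction w generalizing x with
  | nil => exact hx
  | cons c w ih =>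
    show wOrbit f g w (if c then f x else g x) ∈ _
    have := step_Tset hf hg hAfAg hAgKf hKfKg hx
    cases c
    · exact ih this.2
    · exact ih this.1

omit hAfAg hAgKf hKfKg in
lemma wOrbit_continuousOn (w : List Bool) :
    ContinuousOn (wOrbit f g w) (Icc 0 b) ∧ MapsTo (wOrbit f g w) (Icc 0 b) (Icc 0 b) := by
  induction w with
  | nil => exact ⟨continuousOn_id, fun x hx => hx⟩
  | cons c w ih =>
    have hstep : ContinuousOn (fun x => if c then f x else g x) (Icc 0 b) ∧
        MapsTo (fun x => if c then f x else g x) (Icc 0 b) (Icc 0 b) := by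
      cases c
      · simpa using ⟨hg.2.2.2.2.1, hg.2.2.2.1⟩
      · simpa using ⟨hf.2.2.2.2.1, hf.2.2.2.1⟩
    constructor
    · exact ih.1.comp hstep.1 hstep.2
    · exact ih.2.comp hstep.2

/-- Pointwise escape: every point of `[Af, Kf]` admits a word sending it into the
open escape region. -/
lemma pointwise_escape {x : ℝ} (hx : x ∈ Icc Af Kf) :
    ∃ w : List Bool, wOrbit f g w x ∈ Uset Af Kf := by
  have hAf : 0 < Af := hf.1
  by_cases hxAg : x < Ag
  · -- x ∈ Ioo 0 Ag, iterate g down below Af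
    have hx' : x ∈ Ioo 0 Ag := ⟨by linarith [hx.1], hxAg⟩
    obtain ⟨hinv, htend⟩ := iter_to_lo hg hx'
    have hev : ∀ᶠ n in atTop, g^[n] x < Af := htend.eventually (eventually_lt_nhds hAf)
    obtain ⟨n, hn⟩ := hev.exists
    exact ⟨List.replicate n false, by rw [wOrbit_replicate_false]; exact Or.inl hn⟩
  · push_neg at hxAg
    rcases eq_or_lt_of_le hxAg with heq | hlt2
    · -- x = Ag : one f step moves strictly above Ag, then iterate g up
      have hfAg : f Ag ∈ Ioo Ag Kg := by
        obtain ⟨hA, hAK, hKb, hmaps, hcont, hmono, h0, hfixA, hfixK, hlt, hgt⟩ := hf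
        refine ⟨hgt Ag ⟨hAfAg, hAgKf⟩, ?_⟩
        have : f Ag < f Kf := hmono ⟨by linarith, by linarith⟩ ⟨by linarith, by linarith⟩ hAgKf
        rw [hfixK] at this; linarith
      obtain ⟨hinv, htend⟩ := iter_to_hi hg hfAg
      have hev : ∀ᶠ n in atTop, Kf < g^[n] (f Ag) := htend.eventually (eventually_gt_nhds hKfKg)
      obtain ⟨n, hn⟩ := hev.exists
      refine ⟨true :: List.replicate n false, ?_⟩
      show wOrbit f g (List.replicate n false) (f x) ∈ _
      rw [wOrbit_replicate_false, ← heq]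
      exact Or.inr hn
    · -- Ag < x ≤ Kf : iterate g up above Kf
      have hx' : x ∈ Ioo Ag Kg := ⟨hlt2, by linarith [hx.2]⟩
      obtain ⟨hinv, htend⟩ := iter_to_hi hg hx'
      have hev : ∀ᶠ n in atTop, Kf < g^[n] x := htend.eventually (eventually_gt_nhds hKfKg)
      obtain ⟨n, hn⟩ := hev.exists
      exact ⟨List.replicate n false, by rw [wOrbit_replicate_false]; exact Or.inr hn⟩

/-- Uniform escape: a single length `L` works for all of `[Af, Kf]`. -/
lemma exists_escape_word :
    ∃ L : ℕ, ∀ x ∈ Icc Af Kf, ∃ w : List Bool, w.length = L ∧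
      wOrbit f g w x ∈ Uset Af Kf := by
  have hAf : 0 < Af := hf.1
  have hKfb : Kf < b := by linarith [hg.2.2.1]
  have hKfKg' : Kf < Kg := hKfKg
  have hptwise := fun x hx => pointwise_escape hf hg hAfAg hAgKf hKfKg (x := x) hx
  choose! wx hwx using hptwise
  have hNx : ∀ x ∈ Icc Af Kf, (fun y => wOrbit f g (wx x) y) ⁻¹' (Uset Af Kf) ∈ 𝓝 x := by
    intro x hx
    have hca : ContinuousAt (wOrbit f g (wx x)) x :=
      (wOrbit_continuousOn hf hg (wx x)).1.continuousAt
        (Icc_mem_nhds (by linarith [hx.1]) (by linarith [hx.2]))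
    exact hca.preimage_mem_nhds ((isOpen_Uset).mem_nhds (hwx x hx))
  obtain ⟨t, _htsub, hcover⟩ :=
    isCompact_Icc.elim_nhds_subcover (fun x => (fun y => wOrbit f g (wx x) y) ⁻¹' (Uset Af Kf))
      hNx
  refine ⟨t.sup (fun x => (wx x).length), ?_⟩
  intro y hy
  obtain ⟨x, hxt, hyN⟩ := by
    have := hcover hy
    simpa only [mem_iUnion, exists_prop] using this
  have hlen : (wx x).length ≤ t.sup (fun x => (wx x).length) :=
    Finset.le_sup (f := fun x => (wx x).length) hxt
  refine ⟨wx x ++ List.replicate (t.sup (fun x => (wx x).length) - (wx x).length) false,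
    by simp [Nat.add_sub_cancel' hlen], ?_⟩
  rw [wOrbit_append]
  have hy0Kg : y ∈ Icc 0 Kg := ⟨by linarith [hy.1], by linarith [hy.2]⟩
  have hmemT : wOrbit f g (wx x) y ∈ Tset Af Kf Kg :=
    mem_Tset_of_Uset hf hg hAfAg hAgKf hKfKg
      (wOrbit_Icc0Kg hf hg hAfAg hAgKf hKfKg (wx x) hy0Kg) hyN
  exact Tset_subset_Uset
    (wOrbit_Tset hf hg hAfAg hAgKf hKfKg _ hmemT)

lemma step_Ico0Af {x : ℝ} (hx : x ∈ Ico 0 Af) :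
    (f x ∈ Ico 0 Af ∧ g x ∈ Ico 0 Af) ∧ (f x ≤ x ∧ g x ≤ x) := by
  obtain ⟨hA, hAK, hKb, hmaps, hcont, hmono, h0, hfixA, hfixK, hlt, hgt⟩ := hf
  obtain ⟨hA', hAK', hKb', hmaps', hcont', hmono', h0', hfixA', hfixK', hlt', hgt'⟩ := hg
  rcases eq_or_lt_of_le hx.1 with heq | hpos
  · rw [← heq, h0, h0']
    exact ⟨⟨⟨le_rfl, by linarith [hx.2]⟩, ⟨le_rfl, by linarith [hx.2]⟩⟩, le_rfl, le_rfl⟩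
  · have hxb : x ∈ Icc 0 b := ⟨hx.1, by linarith [hx.2]⟩
    have h0mem : (0 : ℝ) ∈ Icc 0 b := ⟨le_rfl, by linarith⟩
    have hfx : f x < x := hlt x (Or.inl ⟨hpos, hx.2⟩)
    have hgx : g x < x := hlt' x (Or.inl ⟨hpos, by linarith [hx.2]⟩)
    have hfpos : 0 < f x := by rw [← h0]; exact hmono h0mem hxb hpos
    have hgpos : 0 < g x := by rw [← h0']; exact hmono' h0mem hxb hpos
    exact ⟨⟨⟨hfpos.le, by linarith [hx.2]⟩, ⟨hgpos.le, by linarith [hx.2]⟩⟩, hfx.le, hgx.le⟩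

/-- Any random orbit starting in `[0, Af)` converges to `0`. -/
lemma seq_tendsto_zero (y : ℕ → ℝ)
    (hstep : ∀ n, y (n + 1) = f (y n) ∨ y (n + 1) = g (y n))
    (h0 : y 0 ∈ Ico 0 Af) : Tendsto y atTop (𝓝 0) := by
  have hAf : 0 < Af := hf.1
  have hb : (0:ℝ) < b := by linarith [hf.1, hf.2.1, hf.2.2.1]
  have hAfb : Af < b := by linarith [hf.2.1, hf.2.2.1]
  have hinv : ∀ n, y n ∈ Ico 0 Af := by
    intro n; induction n with
    | zero => exact h0
    | succ n ih =>
      rcases hstep n with h | h <;> rw [h]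
      · exact ((step_Ico0Af hf hg hAfAg hAgKf hKfKg ih).1).1
      · exact ((step_Ico0Af hf hg hAfAg hAgKf hKfKg ih).1).2
  have hanti : Antitone y := antitone_nat_of_succ_le fun n => by
    rcases hstep n with h | h <;> rw [h]
    · exact ((step_Ico0Af hf hg hAfAg hAgKf hKfKg (hinv n)).2).1
    · exact ((step_Ico0Af hf hg hAfAg hAgKf hKfKg (hinv n)).2).2
  have hbdd : BddBelow (range y) := ⟨0, by rintro z ⟨n, rfl⟩; exact (hinv n).1⟩
  have htend := tendsto_atTop_ciInf hanti hbdd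
  set ℓ := ⨅ n, y n with hldef
  have hl0 : 0 ≤ ℓ := le_ciInf fun n => (hinv n).1
  have hlA : ℓ < Af := lt_of_le_of_lt (ciInf_le hbdd 0) h0.2
  rcases eq_or_lt_of_le hl0 with heq | hpos
  · rwa [← heq] at htend
  · exfalso
    have key : ∀ h : ℝ → ℝ, ContinuousOn h (Icc 0 b) → (∀ z ∈ Ioo 0 Af, h z < z) →
        (∃ᶠ n in atTop, y (n + 1) = h (y n)) → False := by
      intro h hcont hlt hfr
      have hca : ContinuousAt h ℓ := hcont.continuousAt (Icc_mem_nhds hpos (by linarith))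
      have h1 : Tendsto (fun n => h (y n)) atTop (𝓝 (h ℓ)) := hca.tendsto.comp htend
      have h2 : Tendsto (fun n => y (n + 1)) atTop (𝓝 ℓ) := by
        have := htend.comp (tendsto_add_atTop_nat 1)
        simpa [Function.comp_def] using this
      have heq2 : h ℓ = ℓ :=
        tendsto_nhds_unique_of_frequently_eq h1 h2 (hfr.mono fun n hn => hn.symm)
      exact absurd heq2 (ne_of_lt (hlt ℓ ⟨hpos, hlA⟩))
    have hfreq : (∃ᶠ n in atTop, y (n + 1) = f (y n)) ∨ (∃ᶠ n in atTop, y (n + 1) = g (y n)) :=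
      Filter.frequently_or_distrib.mp ((Filter.Eventually.of_forall hstep).frequently)
    rcases hfreq with hfr | hfr
    · exact key f hf.2.2.2.2.1 (fun z hz => hf.2.2.2.2.2.2.2.2.2.1 z (Or.inl hz)) hfr
    · exact key g hg.2.2.2.2.1
        (fun z hz => hg.2.2.2.2.2.2.2.2.2.1 z (Or.inl ⟨hz.1, by linarith [hz.2, hAfAg]⟩)) hfr

/-- One step stays in the upper trap. -/
lemma step_IocKfKg {x : ℝ} (hx : x ∈ Ioc Kf Kg) :
    f x ∈ Ioc Kf Kg ∧ g x ∈ Ioc Kf Kg := by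
  obtain ⟨hA, hAK, hKb, hmaps, hcont, hmono, h0, hfixA, hfixK, hlt, hgt⟩ := hf
  obtain ⟨hA', hAK', hKb', hmaps', hcont', hmono', h0', hfixA', hfixK', hlt', hgt'⟩ := hg
  have hKgb : Kg < b := hKb'
  have hxb : x ∈ Icc 0 b := ⟨by linarith [hx.1, hA, hAfAg, hAgKf], by linarith [hx.2]⟩
  have hKfmem : (Kf : ℝ) ∈ Icc 0 b := ⟨by linarith [hA, hAfAg, hAgKf], by linarith⟩
  have hKgmem : (Kg : ℝ) ∈ Icc 0 b := ⟨by linarith [hA, hAfAg, hAgKf, hKfKg], hKgb.le⟩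
  constructor
  · constructor
    · rw [← hfixK]; exact hmono hKfmem hxb hx.1
    · have := hlt x (Or.inr ⟨hx.1, by linarith [hx.2]⟩)
      linarith [hx.2]
  · rcases eq_or_lt_of_le hx.2 with heq | hlt2
    · rw [heq, hfixK']; exact ⟨by linarith, le_rfl⟩
    · constructor
      · have := hgt' x ⟨by linarith [hx.1], hlt2⟩
        linarith [hx.1]
      · have : g x ≤ g Kg := (hmono'.monotoneOn) hxb hKgmem hx.2
        rw [hfixK'] at this; exact this

/-- Any random orbit starting in `(Kf, Kg]` stays there forever. -/
lemma seq_trap (y : ℕ → ℝ)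
    (hstep : ∀ n, y (n + 1) = f (y n) ∨ y (n + 1) = g (y n))
    (h0 : y 0 ∈ Ioc Kf Kg) : ∀ n, y n ∈ Ioc Kf Kg := by
  intro n; induction n with
  | zero => exact h0
  | succ n ih =>
    have := step_IocKfKg hf hg hAfAg hAgKf hKfKg ih
    rcases hstep n with h | h <;> rw [h]
    · exact this.1
    · exact this.2

end TwoMaps

end Stmt4Aux

open Stmt4Aux

theorem stmt4
    (b Af Kf Ag Kg : ℝ) (hb : 0 < b)
    (f g : ℝ → ℝ)
    (hf : IsIncAlleeMap b Af Kf f) (hg : IsIncAlleeMap b Ag Kg g)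
    (horder : Af < Ag ∧ Ag < Kf ∧ Kf < Kg)
    (p : ℝ) (hp : p ∈ Ioo (0 : ℝ) 1)
    (μ : Measure (ℕ → Bool)) [IsProbabilityMeasure μ]
    (hindep : iIndepFun (fun n (ω : ℕ → Bool) => ω n) μ)
    (hcoin : ∀ n, μ {ω | ω n = true} = ENNReal.ofReal p)
    (x₀ : ℝ) (hx₀ : x₀ ∈ Ioo Af Ag) :
    0 < μ {ω | Tendsto (fun n => randOrbit f g x₀ n ω) atTop (nhds 0)} ∧
    0 < μ {ω | ∃ n₀ : ℕ, ∀ n ≥ n₀, randOrbit f g x₀ n ω ∈ Icc Kf Kg} ∧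
    μ {ω | Tendsto (fun n => randOrbit f g x₀ n ω) atTop (nhds 0)} +
      μ {ω | ∃ n₀ : ℕ, ∀ n ≥ n₀, randOrbit f g x₀ n ω ∈ Icc Kf Kg} = 1 := by
  classical
  obtain ⟨hAfAg, hAgKf, hKfKg⟩ := horder
  set X : ℕ → (ℕ → Bool) → ℝ := fun n ω => randOrbit f g x₀ n ω with hXdef
  have hAf : 0 < Af := hf.1
  have hKgb : Kg < b := hg.2.2.1
  have hKf0 : (0:ℝ) < Kf := by linarith
  have hx₀Kg : x₀ ∈ Icc 0 Kg := ⟨by linarith [hx₀.1], by linarith [hx₀.2]⟩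
  -- the orbit stays in [0, Kg]
  have hXmem : ∀ n ω, X n ω ∈ Icc 0 Kg := by
    intro n ω; induction n with
    | zero => exact hx₀Kg
    | succ n ih =>
      show (if ω n then f (X n ω) else g (X n ω)) ∈ _
      have := step_Icc0Kg hf hg hAfAg hAgKf hKfKg ih
      split
      · exact this.1
      · exact this.2
  -- each X n is measurable
  have hXmeas : ∀ n, Measurable (X n) := by
    intro n
    have : X n = (fun v : Fin n → Bool => wOrbit f g (List.ofFn fun i => v i) x₀)
        ∘ (fun ω (i : Fin n) => ω i) := by
      funext ω; exact randOrbit_eq_wOrbit x₀ n ω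
    rw [this]
    exact (measurable_of_countable _).comp
      (measurable_pi_lambda _ fun i => measurable_pi_apply (i : ℕ))
  -- step increments
  have hXstep : ∀ ω n, X (n + 1) ω = f (X n ω) ∨ X (n + 1) ω = g (X n ω) := by
    intro ω n
    by_cases h : ω n
    · left; show (if ω n then _ else _) = _; rw [if_pos h]
    · right; show (if ω n then _ else _) = _; rw [if_neg h]
  -- target events
  set SA := {ω : ℕ → Bool | Tendsto (fun n => randOrbit f g x₀ n ω) atTop (nhds 0)} with hSAdef
  set SB := {ω : ℕ → Bool | ∃ n₀ : ℕ, ∀ n ≥ n₀, randOrbit f g x₀ n ω ∈ Icc Kf Kg} with hSBdef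
  have hSAmeas : MeasurableSet SA := measurableSet_tendsto (𝓝 0) hXmeas
  have hSBmeas : MeasurableSet SB := by
    have : SB = ⋃ n₀, ⋂ n, ⋂ (_ : n ≥ n₀), (X n) ⁻¹' Icc Kf Kg := by
      ext ω
      simp only [hSBdef, mem_setOf_eq, mem_iUnion, mem_iInter, mem_preimage]
      exact Iff.rfl
    rw [this]
    exact MeasurableSet.iUnion fun n₀ => MeasurableSet.iInter fun n =>
      MeasurableSet.iInter fun _ => (hXmeas n) measurableSet_Icc
  have hdisj : Disjoint SA SB := by
    rw [Set.disjoint_left]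
    intro ω hA hB
    obtain ⟨n₀, hn₀⟩ := hB
    have hev : ∀ᶠ n in atTop, randOrbit f g x₀ n ω < Kf :=
      hA.eventually (eventually_lt_nhds hKf0)
    obtain ⟨n, hn1, hn2⟩ := (hev.and (eventually_ge_atTop n₀)).exists
    exact absurd (hn₀ n hn2).1 (not_le.mpr hn1)
  -- coin probabilities
  have hcoinT : ∀ i, μ ((fun ω : ℕ → Bool => ω i) ⁻¹' {true}) = ENNReal.ofReal p := by
    intro i; rw [← hcoin i]; congr 1
  have hcoinB : ∀ (i : ℕ) (c : Bool),
      μ ((fun ω : ℕ → Bool => ω i) ⁻¹' {c}) = ENNReal.ofReal (if c then p else 1 - p) := by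
    intro i c
    cases c
    · have hcompl : (fun ω : ℕ → Bool => ω i) ⁻¹' {false}
          = ((fun ω : ℕ → Bool => ω i) ⁻¹' {true})ᶜ := by
        ext ω; simp
      simp only [Bool.false_eq_true, if_false]
      rw [hcompl, measure_compl ((measurable_pi_apply i) (measurableSet_singleton true))
        (measure_ne_top μ _), hcoinT, measure_univ, ENNReal.ofReal_sub _ hp.1.le,
        ENNReal.ofReal_one]
    · simpa using hcoinT i
  have hcyl : ∀ (S : Finset ℕ) (c : ℕ → Bool),
      μ (⋂ i ∈ S, (fun ω : ℕ → Bool => ω i) ⁻¹' {c i})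
        = ∏ i ∈ S, μ ((fun ω : ℕ → Bool => ω i) ⁻¹' {c i}) :=
    fun S c => hindep.measure_inter_preimage_eq_mul S (fun i _ => (Set.to_countable _).measurableSet)
  set ρ : ENNReal := ENNReal.ofReal (min p (1 - p)) with hρdef
  have hρ0 : ρ ≠ 0 := by
    simp only [hρdef, ne_eq, ENNReal.ofReal_eq_zero, not_le, lt_min_iff]
    exact ⟨hp.1, by linarith [hp.2]⟩
  have hρ1 : ρ ≤ 1 := by
    rw [hρdef, ← ENNReal.ofReal_one]
    exact ENNReal.ofReal_le_ofReal (le_trans (min_le_left _ _) hp.2.le)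
  have hρcoin : ∀ (i : ℕ) (c : Bool), ρ ≤ μ ((fun ω : ℕ → Bool => ω i) ⁻¹' {c}) := by
    intro i c
    rw [hcoinB]
    apply ENNReal.ofReal_le_ofReal
    cases c
    · simpa using min_le_right p (1 - p)
    · simpa using min_le_left p (1 - p)
  have hcylB : ∀ (S : Finset ℕ) (c : ℕ → Bool),
      ρ ^ S.card ≤ μ (⋂ i ∈ S, (fun ω : ℕ → Bool => ω i) ⁻¹' {c i}) := by
    intro S c
    rw [hcyl]
    calc ρ ^ S.card = ∏ _i ∈ S, ρ := by rw [Finset.prod_const]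
    _ ≤ ∏ i ∈ S, μ ((fun ω : ℕ → Bool => ω i) ⁻¹' {c i}) :=
        Finset.prod_le_prod' (fun i _ => hρcoin i (c i))
  -- POSITIVITY OF μ SA
  have hposA : 0 < μ SA := by
    have hx₀' : x₀ ∈ Ioo 0 Ag := ⟨by linarith [hx₀.1], hx₀.2⟩
    obtain ⟨hinv, htend⟩ := iter_to_lo hg hx₀'
    obtain ⟨N, hN⟩ := (htend.eventually (eventually_lt_nhds hAf)).exists
    set E := ⋂ i ∈ Finset.range N, (fun ω : ℕ → Bool => ω i) ⁻¹' {false} with hEdef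
    have hEsub : E ⊆ SA := by
      intro ω hω
      have hωi : ∀ i < N, ω i = false := by
        intro i hi
        have := hω
        simp only [hEdef, mem_iInter, mem_preimage, mem_singleton_iff, Finset.mem_range] at this
        exact this i hi
      have hXN : X N ω = g^[N] x₀ := by
        have := randOrbit_const_run (f := f) (g := g) false x₀ N ω hωi N le_rfl
        simpa using this
      have htendy : Tendsto (fun j => X (N + j) ω) atTop (𝓝 0) := by
        apply seq_tendsto_zero hf hg hAfAg hAgKf hKfKg
        · intro j
          exact hXstep ω (N + j)
        · show X (N + 0) ω ∈ Ico 0 Af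
          rw [Nat.add_zero, hXN]
          exact ⟨(hinv N).1.le, hN⟩
      show Tendsto (fun n => randOrbit f g x₀ n ω) atTop (𝓝 0)
      rw [← tendsto_add_atTop_iff_nat N]
      simpa [Nat.add_comm] using htendy
    have hEpos : 0 < μ E := by
      have := hcylB (Finset.range N) (fun _ => false)
      rw [zero_lt_iff]
      intro h0
      rw [hEdef] at h0
      rw [h0] at this
      exact (pow_ne_zero N hρ0) (le_antisymm (by simpa using this) zero_le)
    exact lt_of_lt_of_le hEpos (measure_mono hEsub)
  -- POSITIVITY OF μ SB
  have hposB : 0 < μ SB := by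
    have hx₀f : x₀ ∈ Ioo Af Kf := ⟨hx₀.1, by linarith [hx₀.2]⟩
    obtain ⟨hinv1, htend1⟩ := iter_to_hi hf hx₀f
    obtain ⟨N₁, hN₁⟩ := (htend1.eventually (eventually_gt_nhds hAgKf)).exists
    set y₁ := f^[N₁] x₀ with hy₁def
    have hy₁ : y₁ ∈ Ioo Ag Kg := ⟨hN₁, by linarith [(hinv1 N₁).2]⟩
    obtain ⟨hinv2, htend2⟩ := iter_to_hi hg hy₁
    obtain ⟨N₂, hN₂⟩ := (htend2.eventually (eventually_gt_nhds hKfKg)).exists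
    set cc : ℕ → Bool := fun i => decide (i < N₁) with hccdef
    set E := ⋂ i ∈ Finset.range (N₁ + N₂), (fun ω : ℕ → Bool => ω i) ⁻¹' {cc i} with hEdef
    have hEsub : E ⊆ SB := by
      intro ω hω
      have hωi : ∀ i < N₁ + N₂, ω i = cc i := by
        intro i hi
        have := hω
        simp only [hEdef, mem_iInter, mem_preimage, mem_singleton_iff, Finset.mem_range] at this
        exact this i hi
      have hXN₁ : X N₁ ω = y₁ := by
        have := randOrbit_const_run (f := f) (g := g) true x₀ N₁ ω
          (fun i hi => by rw [hωi i (by omega)]; simp [hccdef, hi]) N₁ le_rfl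
        simpa using this
      have hXN : X (N₁ + N₂) ω = g^[N₂] y₁ := by
        have h1 : X (N₁ + N₂) ω = randOrbit f g (X N₁ ω) N₂ (fun i => ω (N₁ + i)) :=
          randOrbit_add x₀ N₁ N₂ ω
        rw [h1, hXN₁]
        have := randOrbit_const_run (f := f) (g := g) false y₁ N₂ (fun i => ω (N₁ + i))
          (fun i hi => by show ω (N₁ + i) = false; rw [hωi (N₁ + i) (by omega)]; simp [hccdef]) N₂ le_rfl
        simpa using this
      have hz : X (N₁ + N₂) ω ∈ Ioc Kf Kg := by
        rw [hXN]; exact ⟨hN₂, (hinv2 N₂).2.le⟩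
      have htrap := seq_trap hf hg hAfAg hAgKf hKfKg (fun j => X ((N₁ + N₂) + j) ω)
        (fun j => hXstep ω ((N₁ + N₂) + j)) (by simpa using hz)
      refine ⟨N₁ + N₂, fun n hn => ?_⟩
      have := htrap (n - (N₁ + N₂))
      simp only [Nat.add_sub_cancel' hn] at this
      exact ⟨this.1.le, this.2⟩
    have hEpos : 0 < μ E := by
      have := hcylB (Finset.range (N₁ + N₂)) cc
      rw [zero_lt_iff]
      intro h0
      rw [hEdef] at h0
      rw [h0] at this
      exact (pow_ne_zero (N₁ + N₂) hρ0) (le_antisymm (by simpa using this) zero_le)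
    exact lt_of_lt_of_le hEpos (measure_mono hEsub)
  refine ⟨hposA, hposB, ?_⟩
  -- THE MAIN IDENTITY
  obtain ⟨L, hL⟩ := exists_escape_word hf hg hAfAg hAgKf hKfKg
  set c₀ : ENNReal := ρ ^ L with hc₀def
  have hc₀0 : c₀ ≠ 0 := pow_ne_zero _ hρ0
  set D : ℕ → Set (ℕ → Bool) := fun k => {ω | X (k * L) ω ∉ Uset Af Kf} with hDdef
  have hDmeas : ∀ k, MeasurableSet (D k) := by
    intro k
    have : D k = (X (k * L)) ⁻¹' (Uset Af Kf)ᶜ := rfl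
    rw [this]
    exact (hXmeas _) (isOpen_Uset.measurableSet.compl)
  -- the key contraction step
  have hstepμ : ∀ k, μ (D (k + 1)) ≤ (1 - c₀) * μ (D k) := by
    intro k
    set m := k * L with hm
    set R₁ : (ℕ → Bool) → (Fin m → Bool) := fun ω i => ω i with hR₁
    set R₂ : (ℕ → Bool) → (Fin L → Bool) := fun ω i => ω (m + i) with hR₂
    have hR₁meas : Measurable R₁ := measurable_pi_lambda _ fun i => measurable_pi_apply (i : ℕ)
    have hR₂meas : Measurable R₂ := measurable_pi_lambda _ fun i => measurable_pi_apply (m + i)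
    have hIndepR : IndepFun R₁ R₂ μ := by
      have hdisjST : Disjoint (Finset.range m) (Finset.Ico m (m + L)) := by
        rw [Finset.disjoint_left]
        intro a ha hb
        rw [Finset.mem_range] at ha
        rw [Finset.mem_Ico] at hb
        omega
      have base := hindep.indepFun_finset (Finset.range m) (Finset.Ico m (m + L)) hdisjST
        (fun i => measurable_pi_apply i)
      exact base.comp
        (measurable_of_countable
          (fun u (i : Fin m) => u ⟨(i : ℕ), Finset.mem_range.mpr i.isLt⟩))
        (measurable_of_countable
          (fun u (i : Fin L) => u ⟨m + (i : ℕ), by rw [Finset.mem_Ico]; omega⟩))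
    set val : (Fin m → Bool) → ℝ := fun v => wOrbit f g (List.ofFn fun i => v i) x₀ with hvaldef
    have hvalX : ∀ ω, X m ω = val (R₁ ω) := fun ω => randOrbit_eq_wOrbit x₀ m ω
    have hXadd : ∀ ω, X (m + L) ω = wOrbit f g (List.ofFn (R₂ ω)) (X m ω) := by
      intro ω
      rw [show X (m + L) ω = randOrbit f g x₀ (m + L) ω from rfl, randOrbit_add,
        randOrbit_eq_wOrbit]
    have hwords : ∀ v : Fin m → Bool, ∃ wv : Fin L → Bool,
        val v ∈ Icc Af Kf → wOrbit f g (List.ofFn wv) (val v) ∈ Uset Af Kf := by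
      intro v
      by_cases hv : val v ∈ Icc Af Kf
      · obtain ⟨w, hwlen, hwU⟩ := hL (val v) hv
        refine ⟨fun i => w.get ⟨(i : ℕ), hwlen ▸ i.isLt⟩, fun _ => ?_⟩
        have heq : List.ofFn (fun i : Fin L => w.get ⟨(i : ℕ), hwlen ▸ i.isLt⟩) = w := by
          apply List.ext_getElem (by simp [hwlen])
          intro i h1 h2
          simp [List.getElem_ofFn]
        rwa [heq]
      · exact ⟨fun _ => false, fun hv' => absurd hv' hv⟩
    choose W hW using hwords
    set V : Finset (Fin m → Bool) := Finset.univ.filter (fun v => val v ∉ Uset Af Kf) with hV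
    have hDk : D k = ⋃ v ∈ V, R₁ ⁻¹' {v} := by
      ext ω
      simp only [hDdef, mem_setOf_eq, mem_iUnion, exists_prop, hV, Finset.mem_filter,
        Finset.mem_univ, true_and, mem_preimage, mem_singleton_iff]
      constructor
      · intro h
        exact ⟨R₁ ω, by rw [← hvalX]; exact h, rfl⟩
      · rintro ⟨v, hv, hvr⟩
        rw [show (X (k * L) ω ∉ Uset Af Kf) ↔ (X m ω ∉ Uset Af Kf) from Iff.rfl, hvalX, hvr]
        exact hv
    have hsub : D (k + 1) ⊆ ⋃ v ∈ V, (R₁ ⁻¹' {v} ∩ (R₂ ⁻¹' {W v})ᶜ) := by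
      intro ω hω
      have hωD : X (m + L) ω ∉ Uset Af Kf := by
        have : (k + 1) * L = m + L := by rw [hm]; ring
        rw [← this]
        exact hω
      have hXmU : X m ω ∉ Uset Af Kf := by
        intro hU
        have hT := mem_Tset_of_Uset hf hg hAfAg hAgKf hKfKg (hXmem m ω) hU
        apply hωD
        rw [hXadd ω]
        exact Tset_subset_Uset (wOrbit_Tset hf hg hAfAg hAgKf hKfKg _ hT)
      have hvmem : R₁ ω ∈ V := by
        simp only [hV, Finset.mem_filter, Finset.mem_univ, true_and]
        rw [← hvalX]
        exact hXmU
      simp only [mem_iUnion, exists_prop]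
      refine ⟨R₁ ω, hvmem, rfl, ?_⟩
      intro hR2
      have hR2eq : R₂ ω = W (R₁ ω) := hR2
      have hvIcc : val (R₁ ω) ∈ Icc Af Kf := by
        rw [← hvalX]
        exact mem_Icc_of_not_Uset hf hg hAfAg hAgKf hKfKg (hXmem m ω) hXmU
      have hesc := hW (R₁ ω) hvIcc
      rw [← hR2eq, ← hvalX, ← hXadd] at hesc
      exact hωD hesc
    have hblock : ∀ w : Fin L → Bool, c₀ ≤ μ (R₂ ⁻¹' {w}) := by
      intro w
      set c : ℕ → Bool := fun i => if h : i - m < L then w ⟨i - m, h⟩ else false with hcdef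
      have hseteq : R₂ ⁻¹' {w} = ⋂ i ∈ Finset.Ico m (m + L),
          (fun ω : ℕ → Bool => ω i) ⁻¹' {c i} := by
        ext ω
        simp only [mem_preimage, mem_singleton_iff, mem_iInter, Finset.mem_Ico]
        constructor
        · intro h i hi
          have h2 := congrFun h ⟨i - m, by omega⟩
          simp only [hR₂] at h2
          rw [show m + (i - m) = i by omega] at h2
          rw [h2, hcdef]
          simp only [dif_pos (show i - m < L by omega)]
        · intro h
          funext j
          have h2 := h (m + (j : ℕ)) ⟨by omega, by omega⟩
          rw [hcdef] at h2
          simp only [show m + (j : ℕ) - m = (j : ℕ) by omega, dif_pos j.isLt] at h2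
          simpa [hR₂] using h2
      rw [hseteq]
      calc c₀ = ρ ^ (Finset.Ico m (m + L)).card := by rw [Nat.card_Ico, hc₀def]; congr 1; omega
      _ ≤ _ := hcylB _ _
    have hbadv : ∀ v, μ ((R₂ ⁻¹' {W v})ᶜ) ≤ 1 - c₀ := by
      intro v
      have hmeasb : MeasurableSet (R₂ ⁻¹' {W v}) :=
        hR₂meas ((Set.to_countable _).measurableSet)
      rw [measure_compl hmeasb (measure_ne_top μ _), measure_univ]
      exact tsub_le_tsub_left (hblock (W v)) 1
    have hAv : ∀ v ∈ V, μ (R₁ ⁻¹' {v} ∩ (R₂ ⁻¹' {W v})ᶜ) ≤ μ (R₁ ⁻¹' {v}) * (1 - c₀) := by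
      intro v _
      have h1 : (R₂ ⁻¹' {W v})ᶜ = R₂ ⁻¹' ({W v}ᶜ) := rfl
      rw [h1, hIndepR.measure_inter_preimage_eq_mul {v} ({W v}ᶜ)
        ((Set.to_countable _).measurableSet) ((Set.to_countable _).measurableSet)]
      exact mul_le_mul_right (by rw [← h1]; exact hbadv v) _
    calc μ (D (k + 1)) ≤ μ (⋃ v ∈ V, (R₁ ⁻¹' {v} ∩ (R₂ ⁻¹' {W v})ᶜ)) := measure_mono hsub
    _ ≤ ∑ v ∈ V, μ (R₁ ⁻¹' {v} ∩ (R₂ ⁻¹' {W v})ᶜ) := measure_biUnion_finset_le V _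
    _ ≤ ∑ v ∈ V, μ (R₁ ⁻¹' {v}) * (1 - c₀) := Finset.sum_le_sum hAv
    _ = (1 - c₀) * ∑ v ∈ V, μ (R₁ ⁻¹' {v}) := by rw [← Finset.sum_mul, mul_comm]
    _ = (1 - c₀) * μ (⋃ v ∈ V, R₁ ⁻¹' {v}) := by
        rw [measure_biUnion_finset
          (fun v₁ _ v₂ _ hne => (Set.disjoint_singleton.mpr hne).preimage R₁)
          (fun v _ => hR₁meas ((Set.to_countable _).measurableSet))]
    _ = (1 - c₀) * μ (D k) := by rw [← hDk]
  -- iterate the contraction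
  have hbound : ∀ k, μ (D k) ≤ (1 - c₀) ^ k := by
    intro k; induction k with
    | zero => simpa using prob_le_one
    | succ k ih =>
      calc μ (D (k + 1)) ≤ (1 - c₀) * μ (D k) := hstepμ k
      _ ≤ (1 - c₀) * (1 - c₀) ^ k := mul_le_mul_right ih _
      _ = (1 - c₀) ^ (k + 1) := by rw [pow_succ, mul_comm]
  have hlt1 : 1 - c₀ < 1 :=
    ENNReal.sub_lt_self ENNReal.one_ne_top one_ne_zero hc₀0
  have htend0 : Tendsto (fun k => (1 - c₀) ^ k) atTop (𝓝 0) :=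
    ENNReal.tendsto_pow_atTop_nhds_zero_of_lt_one hlt1
  have hInter : μ (⋂ k, D k) = 0 := by
    refine le_antisymm ?_ zero_le
    exact ge_of_tendsto htend0 (Filter.Eventually.of_forall fun k =>
      le_trans (measure_mono (iInter_subset _ k)) (hbound k))
  have hesc : μ (⋃ k, (D k)ᶜ) = 1 := by
    rw [← Set.compl_iInter, measure_compl (MeasurableSet.iInter hDmeas) (measure_ne_top μ _),
      hInter, measure_univ, tsub_zero]
  have hsubAB : (⋃ k, (D k)ᶜ) ⊆ SA ∪ SB := by
    intro ω hω
    obtain ⟨k, hk⟩ := mem_iUnion.mp hω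
    have hkU : X (k * L) ω ∈ Uset Af Kf := not_not.mp hk
    set m := k * L with hm
    have hT := mem_Tset_of_Uset hf hg hAfAg hAgKf hKfKg (hXmem m ω) hkU
    rcases hT with hT | hT
    · left
      have htendy : Tendsto (fun j => X (m + j) ω) atTop (𝓝 0) := by
        apply seq_tendsto_zero hf hg hAfAg hAgKf hKfKg
        · intro j; exact hXstep ω (m + j)
        · simpa using hT
      show Tendsto (fun n => randOrbit f g x₀ n ω) atTop (𝓝 0)
      rw [← tendsto_add_atTop_iff_nat m]
      simpa [Nat.add_comm] using htendy
    · right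
      have htrap := seq_trap hf hg hAfAg hAgKf hKfKg (fun j => X (m + j) ω)
        (fun j => hXstep ω (m + j)) (by simpa using hT)
      refine ⟨m, fun n hn => ?_⟩
      have := htrap (n - m)
      simp only [Nat.add_sub_cancel' hn] at this
      exact ⟨this.1.le, this.2⟩
  have hABfull : μ (SA ∪ SB) = 1 := by
    refine le_antisymm prob_le_one ?_
    rw [← hesc]
    exact measure_mono hsubAB
  rw [← measure_union hdisj hSBmeas]
  exact hABfull
end

section
/- Let f be a strictly increasing Allee map on [0,b] with threshold A_f and carrying capacity K_f, and let g be a strictly increasing Allee map on [0,b] with threshold A_g and carrying capacity K_g, where A_f < A_g < K_f < K_g. Let δ > 0 be such that the sets U₁ = {x ∈ (0,A_f) : min(x−f(x), x−g(x)) ≥ δ}, U₂ = {x ∈ (A_g,K_f) : min(f(x)−x, g(x)−x) ≥ δ}, U₃ = {x ∈ (K_g,b) : min(x−f(x), x−g(x)) ≥ δ} are nonempty, and assume that for every x ∈ [0,b] there exists x* ∈ [x,b] with min(x*−f(x*), x*−g(x*)) ≥ δ. Set w₁ = inf U₁ and z₁ = sup U₁. If y₀ ∈ [0, z₁], then μ({ω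 : ∃ n₀ ∈ ℕ, ∀ n ≥ n₀, Y n ω ∈ [0, w₁)}) = 1. -/
open MeasureTheory ProbabilityTheory Filter Set
open scoped Topology

/-- Truncation of the real line to the interval `[0, b]`. -/
noncomputable def chi (b x : ℝ) : ℝ := if x < 0 then 0 else if x ≤ b then x else b

/-- The randomly perturbed orbit: at each step apply `f` (on `true`) or `g` (on `false`),
add the noise, and truncate to `[0, b]`. -/
noncomputable def pertOrbit (b : ℝ) (f g : ℝ → ℝ) (y₀ : ℝ) :
    ℕ → (ℕ → Bool × ℝ) → ℝ
  | 0, _ => y₀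
  | n + 1, ω =>
      if (ω n).1 then chi b (f (pertOrbit b f g y₀ n ω) + (ω n).2)
      else chi b (g (pertOrbit b f g y₀ n ω) + (ω n).2)

private lemma chi_mem_Icc {b : ℝ} (hb : 0 ≤ b) (x : ℝ) : chi b x ∈ Icc 0 b := by
  unfold chi; split_ifs <;> constructor <;> linarith

private lemma chi_le {b x c : ℝ} (hx : x ≤ c) (hc : 0 ≤ c) (hcb : c ≤ b) : chi b x ≤ c := by
  unfold chi; split_ifs <;> linarith

private lemma chi_lt {b x c : ℝ} (hx : x < c) (hc : 0 < c) (hcb : c ≤ b) : chi b x < c := by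
  unfold chi; split_ifs <;> linarith

theorem stmt5
    (b Af Kf Ag Kg : ℝ) (hb : 0 < b)
    (f g : ℝ → ℝ)
    (hf : IsIncAlleeMap b Af Kf f) (hg : IsIncAlleeMap b Ag Kg g)
    (horder : Af < Ag ∧ Ag < Kf ∧ Kf < Kg)
    (p δ : ℝ) (hp : p ∈ Ioo (0 : ℝ) 1) (hδ : 0 < δ)
    -- the noise law
    (ν : Measure ℝ) [IsProbabilityMeasure ν]
    (hν₁ : ν (Ioo (-δ) δ) = 1)
    (hν₂ : ∀ a c : ℝ, -δ ≤ a → a < c → c ≤ δ → 0 < ν (Ioo a c))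
    -- the i.i.d. driving sequence: independent coordinates, each with law Bernoulli(p) ⊗ ν
    (μ : Measure (ℕ → Bool × ℝ)) [IsProbabilityMeasure μ]
    (hindep : iIndepFun (fun n ω => ω n) μ)
    (hlaw : ∀ n, μ.map (fun ω => ω n) =
      ((PMF.bernoulli (Real.toNNReal p) (Real.toNNReal_le_one.mpr hp.2.le)).toMeasure).prod ν)
    -- the sets U₁, U₂, U₃
    (U₁ U₂ U₃ : Set ℝ)
    (hU₁ : U₁ = {x ∈ Ioo 0 Af | δ ≤ min (x - f x) (x - g x)})
    (hU₂ : U₂ = {x ∈ Ioo Ag Kf | δ ≤ min (f x - x) (g x - x)})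
    (hU₃ : U₃ = {x ∈ Ioo Kg b | δ ≤ min (x - f x) (x - g x)})
    (hU₁ne : U₁.Nonempty) (hU₂ne : U₂.Nonempty) (hU₃ne : U₃.Nonempty)
    (hstar : ∀ x ∈ Icc (0 : ℝ) b, ∃ y ∈ Icc x b, δ ≤ min (y - f y) (y - g y))
    (y₀ : ℝ) (hy₀ : y₀ ∈ Icc 0 (sSup U₁)) :
    μ {ω | ∃ n₀ : ℕ, ∀ n ≥ n₀, pertOrbit b f g y₀ n ω ∈ Ico 0 (sInf U₁)} = 1 := by
  obtain ⟨hA0f, hAKf, hKbf, hmapf, hcontf, hmonof, hf0, hfA, hfK, hlt_f, hgt_f⟩ := hf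
  obtain ⟨hA0g, hAKg, hKbg, hmapg, hcontg, hmonog, hg0, hgA, hgK, hlt_g, hgt_g⟩ := hg
  have hmf : MonotoneOn f (Icc 0 b) := hmonof.monotoneOn
  have hmg : MonotoneOn g (Icc 0 b) := hmonog.monotoneOn
  have hAfb : Af < b := hAKf.trans hKbf
  set z₁ := sSup U₁ with hz₁def
  set w₁ := sInf U₁ with hw₁def
  -- a closed superset of U₁
  set C : Set ℝ := (Icc 0 b ∩ (fun x => x - f x) ⁻¹' Ici δ) ∩
      (Icc 0 b ∩ (fun x => x - g x) ⁻¹' Ici δ) with hCdef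
  have hCclosed : IsClosed C := IsClosed.inter
    ((continuousOn_id.sub hcontf).preimage_isClosed_of_isClosed isClosed_Icc isClosed_Ici)
    ((continuousOn_id.sub hcontg).preimage_isClosed_of_isClosed isClosed_Icc isClosed_Ici)
  have hU₁sub : U₁ ⊆ C := by
    intro x hx
    rw [hU₁] at hx
    obtain ⟨⟨hx0, hxA⟩, hxm⟩ := hx
    have h1 := le_min_iff.mp hxm
    exact ⟨⟨⟨hx0.le, hxA.le.trans hAfb.le⟩, h1.1⟩, ⟨⟨hx0.le, hxA.le.trans hAfb.le⟩, h1.2⟩⟩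
  have hbddA : BddAbove U₁ := ⟨Af, fun x hx => by rw [hU₁] at hx; exact hx.1.2.le⟩
  have hbddB : BddBelow U₁ := ⟨0, fun x hx => by rw [hU₁] at hx; exact hx.1.1.le⟩
  have hz₁C : z₁ ∈ C := closure_minimal hU₁sub hCclosed (csSup_mem_closure hU₁ne hbddA)
  have hw₁C : w₁ ∈ C := closure_minimal hU₁sub hCclosed (csInf_mem_closure hU₁ne hbddB)
  obtain ⟨⟨hz₁Icc, hz₁f'⟩, ⟨-, hz₁g'⟩⟩ := hz₁C
  obtain ⟨⟨hw₁Icc, hw₁f'⟩, ⟨-, hw₁g'⟩⟩ := hw₁C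
  simp only [mem_preimage, mem_Ici] at hz₁f' hz₁g' hw₁f' hw₁g'
  have hz₁f : δ ≤ z₁ - f z₁ := hz₁f'
  have hz₁g : δ ≤ z₁ - g z₁ := hz₁g'
  have hw₁f : δ ≤ w₁ - f w₁ := hw₁f'
  have hw₁g : δ ≤ w₁ - g w₁ := hw₁g'
  have hwz : w₁ ≤ z₁ := csInf_le_csSup hU₁ne hbddB hbddA
  have hw₁pos : 0 < w₁ := by
    have := (hmapf hw₁Icc).1
    linarith
  have hz₁pos : 0 < z₁ := lt_of_lt_of_le hw₁pos hwz
  have hz₁leAf : z₁ ≤ Af := csSup_le hU₁ne (fun x hx => by rw [hU₁] at hx; exact hx.1.2.le)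
  have hz₁Af : z₁ < Af := by
    rcases lt_or_eq_of_le hz₁leAf with h | h
    · exact h
    · rw [h, hfA] at hz₁f; linarith
  have hz₁b : z₁ ≤ b := hz₁Icc.2
  have hw₁b : w₁ ≤ b := hw₁Icc.2
  -- key contraction lemma
  have key : ∀ φ : ℝ → ℝ, MonotoneOn φ (Icc 0 b) → ∀ c, c ∈ Icc 0 b → δ ≤ c - φ c → 0 < c →
      ∀ y e, y ∈ Icc 0 b → y ≤ c → e < δ → chi b (φ y + e) < c := by
    intro φ hφ c hc hcδ hcpos y e hy hyc he
    have h1 : φ y ≤ φ c := hφ hy hc hyc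
    exact chi_lt (by linarith) hcpos hc.2
  have hdec : ∀ φ : ℝ → ℝ, MonotoneOn φ (Icc 0 b) → (∀ u ∈ Icc 0 b, φ u ≤ max (f u) (g u)) →
      ∀ y e a', y ∈ Icc 0 b → a' ∈ Icc 0 b → y ≤ a' → e < 0 →
      chi b (φ y + e) ≤ max (f a') (g a') := by
    intro φ hφ hφle y e a' hy ha' hya he
    have h1 : φ y ≤ φ a' := hφ hy ha' hya
    have h2 : 0 ≤ max (f a') (g a') := le_trans (hmapf ha').1 (le_max_left _ _)
    have h3 : max (f a') (g a') ≤ b := max_le (hmapf ha').2 (hmapg ha').2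
    exact chi_le (by linarith [hφle a' ha']) h2 h3
  -- the deterministic descending sequence
  set h : ℝ → ℝ := fun x => max (f x) (g x) with hhdef
  set a : ℕ → ℝ := fun k => h^[k] z₁ with hadef
  have ha0 : a 0 = z₁ := rfl
  have hasucc : ∀ k, a (k + 1) = max (f (a k)) (g (a k)) := fun k =>
    Function.iterate_succ_apply' h k z₁
  have hamem : ∀ k, a k ∈ Icc 0 z₁ := by
    intro k; induction k with
    | zero => exact ⟨hz₁pos.le, le_refl _⟩
    | succ k ih =>
      have hIcc : a k ∈ Icc 0 b := ⟨ih.1, ih.2.trans hz₁b⟩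
      rw [hasucc]
      refine ⟨le_trans (hmapf hIcc).1 (le_max_left _ _), max_le ?_ ?_⟩
      · have := hmf hIcc hz₁Icc ih.2; linarith
      · have := hmg hIcc hz₁Icc ih.2; linarith
  have haanti : Antitone a := by
    apply antitone_nat_of_succ_le
    intro k
    rw [hasucc]
    rcases eq_or_lt_of_le (hamem k).1 with h0 | h0
    · rw [← h0, hf0, hg0]; simp
    · have hkA : a k < Af := lt_of_le_of_lt (hamem k).2 hz₁Af
      have h1 := hlt_f (a k) (Or.inl ⟨h0, hkA⟩)
      have h2 := hlt_g (a k) (Or.inl ⟨h0, hkA.trans horder.1⟩)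
      exact max_le h1.le h2.le
  have hbdd : BddBelow (Set.range a) := ⟨0, by rintro _ ⟨k, rfl⟩; exact (hamem k).1⟩
  set L := ⨅ k, a k with hLdef
  have haL : Tendsto a atTop (𝓝 L) := tendsto_atTop_ciInf haanti hbdd
  have hL0 : 0 ≤ L := le_ciInf fun k => (hamem k).1
  have hLz : L ≤ z₁ := ciInf_le hbdd 0
  have hLIcc : L ∈ Icc 0 b := ⟨hL0, hLz.trans hz₁b⟩
  have haLw : Tendsto a atTop (𝓝[Icc 0 b] L) :=
    tendsto_nhdsWithin_of_tendsto_nhds_of_eventually_within a haL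
      (Eventually.of_forall fun k => ⟨(hamem k).1, (hamem k).2.trans hz₁b⟩)
  have hfix : L = max (f L) (g L) := by
    have h1 : Tendsto (fun k => a (k + 1)) atTop (𝓝 L) :=
      haL.comp (tendsto_add_atTop_nat 1)
    have h1' : Tendsto (fun k => max (f (a k)) (g (a k))) atTop (𝓝 L) := by
      simpa only [hasucc] using h1
    have h2 : Tendsto (fun k => max (f (a k)) (g (a k))) atTop (𝓝 (max (f L) (g L))) :=
      (Filter.Tendsto.max (Filter.Tendsto.comp (hcontf L hLIcc) haLw)
        (Filter.Tendsto.comp (hcontg L hLIcc) haLw))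
    exact tendsto_nhds_unique h1' h2
  have hLzero : L = 0 := by
    by_contra hne
    have hLpos : 0 < L := lt_of_le_of_ne hL0 (Ne.symm hne)
    have hLA : L < Af := lt_of_le_of_lt hLz hz₁Af
    have h1 := hlt_f L (Or.inl ⟨hLpos, hLA⟩)
    have h2 := hlt_g L (Or.inl ⟨hLpos, hLA.trans horder.1⟩)
    have := max_lt h1 h2
    rw [← hfix] at this
    exact lt_irrefl L this
  obtain ⟨N, hN⟩ := (haL.eventually_lt_const (show L < w₁ by rw [hLzero]; exact hw₁pos)).exists
  -- probability part
  set B : ℕ → Set (ℕ → Bool × ℝ) := fun i =>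
    (fun ω => ω i) ⁻¹' ((univ : Set Bool) ×ˢ Ioo (-δ) 0) with hBdef
  set D : ℕ → Set (ℕ → Bool × ℝ) := fun m => ⋂ j ∈ Finset.range N, B (m + j) with hDdef
  set E : Set (ℕ → Bool × ℝ) := ⋂ k, ⋃ m, D (k + m) with hEdef
  have hprod_meas : MeasurableSet ((univ : Set Bool) ×ˢ Ioo (-δ) 0) :=
    MeasurableSet.univ.prod measurableSet_Ioo
  have hBmeas : ∀ i, MeasurableSet (B i) := fun i =>
    hprod_meas.preimage (measurable_pi_apply i)
  set q := ν (Ioo (-δ) 0) with hqdef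
  have hqpos : 0 < q := hν₂ (-δ) 0 le_rfl (neg_lt_zero.mpr hδ) hδ.le
  have hBq : ∀ i, μ (B i) = q := by
    intro i
    rw [hBdef]
    rw [← Measure.map_apply (measurable_pi_apply i) hprod_meas, hlaw i,
      Measure.prod_prod, measure_univ, one_mul]
  have hDmeas : ∀ m, MeasurableSet (D m) := fun m =>
    MeasurableSet.iInter fun j => MeasurableSet.iInter fun _ => hBmeas _
  have hDm : ∀ m, μ (D m) = q ^ N := by
    intro m
    have h1 : D m = ⋂ i ∈ Finset.image (fun j => m + j) (Finset.range N), B i := by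
      rw [hDdef]; exact Finset.set_biInter_finset_image.symm
    have hinj : ∀ x ∈ Finset.range N, ∀ y ∈ Finset.range N,
        m + x = m + y → x = y := fun x _ y _ hxy => by omega
    rw [h1, hindep.meas_biInter (fun i _ =>
        MeasurableSpace.measurableSet_comap.mpr ⟨_, hprod_meas, rfl⟩),
      Finset.prod_image hinj]
    rw [Finset.prod_congr rfl (fun x _ => hBq (m + x)), Finset.prod_const, Finset.card_range]
  have hSanti : Antitone (fun k => ⋃ m, D (k + m)) := by
    intro k j hkj ω hω
    obtain ⟨m, hm⟩ := mem_iUnion.mp hω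
    exact mem_iUnion.mpr ⟨(j - k) + m, by rwa [show k + ((j - k) + m) = j + m by omega]⟩
  have hEmeas : MeasurableSet E :=
    MeasurableSet.iInter fun k => MeasurableSet.iUnion fun m => hDmeas _
  have hEpos : q ^ N ≤ μ E := by
    rw [hEdef, hSanti.measure_iInter
      (fun k => (MeasurableSet.iUnion fun m => hDmeas _).nullMeasurableSet)
      ⟨0, measure_ne_top μ _⟩]
    refine le_iInf fun k => ?_
    show q ^ N ≤ μ (⋃ m, D (k + m))
    calc q ^ N = μ (D (k + 0)) := (hDm _).symm
    _ ≤ _ := measure_mono (subset_iUnion (fun m => D (k + m)) 0)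
  have htail : MeasurableSet[limsup
      (fun n => MeasurableSpace.comap (fun ω : ℕ → Bool × ℝ => ω n) inferInstance) atTop] E := by
    rw [limsup_eq_iInf_iSup_of_nat]
    refine MeasurableSpace.measurableSet_iInf.mpr fun n => ?_
    have hEeq : E = ⋂ k, ⋃ m, D ((n + k) + m) := by
      apply Subset.antisymm
      · exact fun x hx => mem_iInter.mpr fun k => mem_iInter.mp hx (n + k)
      · exact fun x hx => mem_iInter.mpr fun k =>
          hSanti (Nat.le_add_left k n) (mem_iInter.mp hx k)
    rw [hEeq]
    refine MeasurableSet.iInter fun k => MeasurableSet.iUnion fun m => ?_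
    refine MeasurableSet.iInter fun j => MeasurableSet.iInter fun _ => ?_
    have hle : MeasurableSpace.comap (fun ω : ℕ → Bool × ℝ => ω ((n + k) + m + j))
        inferInstance ≤ ⨆ i, ⨆ (_ : i ≥ n),
          MeasurableSpace.comap (fun ω : ℕ → Bool × ℝ => ω i) inferInstance :=
      le_iSup₂ (f := fun i (_ : i ≥ n) =>
        MeasurableSpace.comap (fun ω : ℕ → Bool × ℝ => ω i) inferInstance)
        ((n + k) + m + j) (by omega)
    exact hle _ (MeasurableSpace.measurableSet_comap.mpr ⟨_, hprod_meas, rfl⟩)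
  have hE1 : μ E = 1 := by
    rcases measure_zero_or_one_of_measurableSet_limsup_atTop
      (fun n => (measurable_pi_apply n).comap_le) hindep.iIndep htail with h0 | h1
    · rw [h0] at hEpos
      exact absurd (le_antisymm hEpos (zero_le)) (pow_ne_zero N hqpos.ne')
    · exact h1
  -- the almost sure noise bound
  set Gs : Set (ℕ → Bool × ℝ) := ⋂ n,
    (fun ω => ω n) ⁻¹' ((univ : Set Bool) ×ˢ Ioo (-δ) δ) with hGdef
  have hGpm : MeasurableSet ((univ : Set Bool) ×ˢ Ioo (-δ) δ) :=
    MeasurableSet.univ.prod measurableSet_Ioo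
  have hGnmeas : ∀ n : ℕ, MeasurableSet
      ((fun ω : ℕ → Bool × ℝ => ω n) ⁻¹' ((univ : Set Bool) ×ˢ Ioo (-δ) δ)) := fun n =>
    hGpm.preimage (measurable_pi_apply n)
  have hGmeas : MeasurableSet Gs := MeasurableSet.iInter hGnmeas
  have hG1 : μ Gs = 1 := by
    have hone : ∀ n : ℕ, μ ((fun ω : ℕ → Bool × ℝ => ω n) ⁻¹'
        ((univ : Set Bool) ×ˢ Ioo (-δ) δ)) = 1 := by
      intro n
      rw [← Measure.map_apply (measurable_pi_apply n) hGpm, hlaw n,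
        Measure.prod_prod, measure_univ, one_mul, hν₁]
    have hcompl : μ Gsᶜ = 0 := by
      rw [hGdef, compl_iInter]
      exact measure_iUnion_null fun n =>
        (prob_compl_eq_zero_iff (hGnmeas n)).mpr (hone n)
    exact (prob_compl_eq_zero_iff hGmeas).mp hcompl
  -- the deterministic conclusion on Gs ∩ E
  have hsubset : Gs ∩ E ⊆
      {ω | ∃ n₀ : ℕ, ∀ n ≥ n₀, pertOrbit b f g y₀ n ω ∈ Ico 0 w₁} := by
    rintro ω ⟨hωG, hωE⟩
    have hnoise : ∀ n, (ω n).2 ∈ Ioo (-δ) δ := by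
      intro n
      have := mem_iInter.mp hωG n
      exact (mem_prod.mp this).2
    obtain ⟨m, hm⟩ := mem_iUnion.mp (mem_iInter.mp hωE 0)
    have hm' : ω ∈ D m := by simpa using hm
    have hblock : ∀ j, j < N → (ω (m + j)).2 ∈ Ioo (-δ) 0 := by
      intro j hj
      rw [hDdef] at hm'
      simp only [mem_iInter] at hm'
      have := hm' j (Finset.mem_range.mpr hj)
      exact (mem_prod.mp this).2
    have hYmem : ∀ n, pertOrbit b f g y₀ n ω ∈ Icc 0 b := by
      intro n; induction n with
      | zero => exact ⟨hy₀.1, hy₀.2.trans hz₁b⟩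
      | succ n ih =>
        simp only [pertOrbit]
        split_ifs <;> exact chi_mem_Icc hb.le _
    have hYz : ∀ n, pertOrbit b f g y₀ n ω ≤ z₁ := by
      intro n; induction n with
      | zero => exact hy₀.2
      | succ n ih =>
        simp only [pertOrbit]
        split_ifs
        · exact (key f hmf z₁ hz₁Icc hz₁f hz₁pos _ _ (hYmem n) ih (hnoise n).2).le
        · exact (key g hmg z₁ hz₁Icc hz₁g hz₁pos _ _ (hYmem n) ih (hnoise n).2).le
    have hdesc : ∀ k, k ≤ N → pertOrbit b f g y₀ (m + k) ω ≤ a k := by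
      intro k hk; induction k with
      | zero => exact hYz m
      | succ k ih =>
        have hk' : k < N := hk
        have ihh := ih hk'.le
        have hε := hblock k hk'
        have haIcc : a k ∈ Icc 0 b := ⟨(hamem k).1, (hamem k).2.trans hz₁b⟩
        rw [show m + (k + 1) = (m + k) + 1 from rfl, hasucc]
        simp only [pertOrbit]
        split_ifs
        · exact hdec f hmf (fun u _ => le_max_left _ _) _ _ _ (hYmem _) haIcc ihh hε.2
        · exact hdec g hmg (fun u _ => le_max_right _ _) _ _ _ (hYmem _) haIcc ihh hε.2
    have hfinal : ∀ t, pertOrbit b f g y₀ (m + N + t) ω < w₁ := by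
      intro t; induction t with
      | zero => exact lt_of_le_of_lt (hdesc N le_rfl) hN
      | succ t ih =>
        rw [show m + N + (t + 1) = (m + N + t) + 1 from rfl]
        simp only [pertOrbit]
        split_ifs
        · exact key f hmf w₁ hw₁Icc hw₁f hw₁pos _ _ (hYmem _) ih.le (hnoise _).2
        · exact key g hmg w₁ hw₁Icc hw₁g hw₁pos _ _ (hYmem _) ih.le (hnoise _).2
    refine ⟨m + N, fun n hn => ?_⟩
    obtain ⟨t, rfl⟩ := Nat.exists_eq_add_of_le hn
    exact ⟨(hYmem _).1, hfinal t⟩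
  have hGE : μ (Gs ∩ E) = 1 := by
    have hc : μ (Gs ∩ E)ᶜ = 0 := by
      rw [compl_inter]
      refine measure_union_null ?_ ?_
      · exact (prob_compl_eq_zero_iff hGmeas).mpr hG1
      · exact (prob_compl_eq_zero_iff hEmeas).mpr hE1
    exact (prob_compl_eq_zero_iff (hGmeas.inter hEmeas)).mp hc
  exact le_antisymm prob_le_one (hGE ▸ measure_mono hsubset)
end
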